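/- arXiv:2502.03095 — 11 statements merged into one kernel-verified Lean document; each statement's English description precedes it below -/
import Mathlib

section
/- Define the Reward-Difference-Approximation loss of a positive policy π by L_RDA(π) = Σ_{x∈X} 𝒟(x) · Σ_{y₁,y₂∈Y} π(y₁|x)·π(y₂|x) · ((1/τ)·log(π(y₁|x)/π(y₂|x)) − (r(x,y₁) − r(x,y₂)))². Then L_RDA(π) ≥ 0 for every positive policy π, L_RDA(π^τ) = 0, and L_RDA(π) = 0 implies π(·|x) = π^τ(·|x) for every x with 𝒟(x) > 0; hence π^τ is the minimizer of L_RDA. -/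
/-- The Reward-Difference-Approximation loss is nonnegative, vanishes
at the Boltzmann policy π^τ, and vanishing forces π(·|x) = π^τ(·|x) wherever
𝒟(x) > 0; hence π^τ is the minimizer of L_RDA. -/
theorem reward_difference_approximation_target_distribution
    {X Y : Type*} [Fintype X] [Fintype Y] [Nonempty X] [Nonempty Y]
    (r : X → Y → ℝ) (τ : ℝ) (hτ : 0 < τ)
    (D : X → ℝ) (hD0 : ∀ x, 0 ≤ D x) (hD1 : ∑ x : X, D x = 1)
    (πt : X → Y → ℝ)
    (hπt : ∀ x y, πt x y = Real.exp (τ * r x y) / ∑ y' : Y, Real.exp (τ * r x y'))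
    (LRDA : (X → Y → ℝ) → ℝ)
    (hLRDA : ∀ p : X → Y → ℝ,
      LRDA p = ∑ x : X, D x * ∑ y₁ : Y, ∑ y₂ : Y,
        p x y₁ * p x y₂ *
          ((1 / τ) * Real.log (p x y₁ / p x y₂) - (r x y₁ - r x y₂)) ^ 2) :
    LRDA πt = 0 ∧
    ∀ π : X → Y → ℝ, (∀ x y, 0 < π x y) → (∀ x, ∑ y : Y, π x y = 1) →
      0 ≤ LRDA π ∧
      (LRDA π = 0 → ∀ x, 0 < D x → π x = πt x) := by
  have hZ : ∀ x : X, 0 < ∑ y' : Y, Real.exp (τ * r x y') := fun x =>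
    Finset.sum_pos (fun y _ => Real.exp_pos _) Finset.univ_nonempty
  constructor
  · rw [hLRDA]
    apply Finset.sum_eq_zero
    intro x _
    have : (∑ y₁ : Y, ∑ y₂ : Y,
        πt x y₁ * πt x y₂ *
          ((1 / τ) * Real.log (πt x y₁ / πt x y₂) - (r x y₁ - r x y₂)) ^ 2) = 0 := by
      apply Finset.sum_eq_zero; intro y₁ _
      apply Finset.sum_eq_zero; intro y₂ _
      have hq : πt x y₁ / πt x y₂ = Real.exp (τ * r x y₁ - τ * r x y₂) := by
        rw [hπt, hπt, Real.exp_sub]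
        field_simp
      rw [hq, Real.log_exp]
      have : (1 / τ) * (τ * r x y₁ - τ * r x y₂) - (r x y₁ - r x y₂) = 0 := by
        field_simp; ring
      rw [this]
      simp
    rw [this, mul_zero]
  · intro π hpos hsum1
    have hnn : ∀ (x : X) (y₁ y₂ : Y), 0 ≤
        π x y₁ * π x y₂ *
          ((1 / τ) * Real.log (π x y₁ / π x y₂) - (r x y₁ - r x y₂)) ^ 2 :=
      fun x y₁ y₂ =>
        mul_nonneg (mul_nonneg (hpos x y₁).le (hpos x y₂).le) (sq_nonneg _)
    have hterm_nonneg : ∀ x : X, 0 ≤ ∑ y₁ : Y, ∑ y₂ : Y,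
        π x y₁ * π x y₂ *
          ((1 / τ) * Real.log (π x y₁ / π x y₂) - (r x y₁ - r x y₂)) ^ 2 :=
      fun x => Finset.sum_nonneg fun y₁ _ => Finset.sum_nonneg fun y₂ _ => hnn x y₁ y₂
    constructor
    · rw [hLRDA]
      exact Finset.sum_nonneg fun x _ => mul_nonneg (hD0 x) (hterm_nonneg x)
    · intro hL0 x hDx
      rw [hLRDA] at hL0
      have hx0 := (Finset.sum_eq_zero_iff_of_nonneg
        (fun x _ => mul_nonneg (hD0 x) (hterm_nonneg x))).mp hL0 x (Finset.mem_univ x)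
      have hinner : (∑ y₁ : Y, ∑ y₂ : Y,
          π x y₁ * π x y₂ *
            ((1 / τ) * Real.log (π x y₁ / π x y₂) - (r x y₁ - r x y₂)) ^ 2) = 0 := by
        rcases mul_eq_zero.mp hx0 with h | h
        · exact absurd h hDx.ne'
        · exact h
      have hy : ∀ y₁ y₂ : Y,
          π x y₁ * π x y₂ *
            ((1 / τ) * Real.log (π x y₁ / π x y₂) - (r x y₁ - r x y₂)) ^ 2 = 0 := by
        intro y₁ y₂
        have h1 := (Finset.sum_eq_zero_iff_of_nonneg
          (fun y₁ _ => Finset.sum_nonneg fun y₂ _ => hnn x y₁ y₂)).mp hinner y₁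
          (Finset.mem_univ y₁)
        exact (Finset.sum_eq_zero_iff_of_nonneg (fun y₂ _ => hnn x y₁ y₂)).mp h1 y₂
          (Finset.mem_univ y₂)
      have hratio : ∀ y₁ y₂ : Y,
          π x y₁ * Real.exp (τ * r x y₂) = π x y₂ * Real.exp (τ * r x y₁) := by
        intro y₁ y₂
        have h := hy y₁ y₂
        have hp : π x y₁ * π x y₂ ≠ 0 := (mul_pos (hpos x y₁) (hpos x y₂)).ne'
        have hsq : ((1 / τ) * Real.log (π x y₁ / π x y₂) - (r x y₁ - r x y₂)) ^ 2 = 0 :=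
          (mul_eq_zero.mp h).resolve_left hp
        have hlog : Real.log (π x y₁ / π x y₂) = τ * r x y₁ - τ * r x y₂ := by
          have h0 := pow_eq_zero_iff (n := 2) (by norm_num) |>.mp hsq
          have h2 : (1 / τ) * Real.log (π x y₁ / π x y₂) = r x y₁ - r x y₂ := by
            linarith
          have h3 : Real.log (π x y₁ / π x y₂) =
              τ * ((1 / τ) * Real.log (π x y₁ / π x y₂)) := by
            field_simp
          rw [h2] at h3
          rw [h3]; ring
        have hq : π x y₁ / π x y₂ = Real.exp (τ * r x y₁) / Real.exp (τ * r x y₂) := by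
          rw [← Real.exp_sub, ← hlog, Real.exp_log (div_pos (hpos x y₁) (hpos x y₂))]
        have := (div_eq_div_iff (hpos x y₂).ne' (Real.exp_pos (τ * r x y₂)).ne').mp hq
        linarith
      funext y
      have hsum : π x y * (∑ y' : Y, Real.exp (τ * r x y')) =
          Real.exp (τ * r x y) * ∑ y' : Y, π x y' := by
        rw [Finset.mul_sum, Finset.mul_sum]
        exact Finset.sum_congr rfl fun y' _ => by
          rw [hratio y y', mul_comm]
      rw [hsum1 x, mul_one] at hsum
      rw [hπt, eq_div_iff (hZ x).ne']
      exact hsum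
end

section
/- Let ω : ℝ × ℝ → (0,1) satisfy the symmetric complementarity property ω(a,b) = 1 − ω(b,a) for all a, b. Define the true comparison probability p*(x,y₁,y₂) = ω(r(x,y₁), r(x,y₂)), the implicit reward of a positive policy π by r_π(x,y) = (1/τ)·log(Z(x)·π(y|x)), the model comparison probability p_π(x,y₁,y₂) = ω(r_π(x,y₁), r_π(x,y₂)), and the PRA loss L_PRA(π) = Σ_{x∈X} 𝒟(x) · Σ_{y₁,y₂∈Y} π(y₁|x)·π(y₂|x) · [p*(x,y₁,y₂)·log(p*(x,y₁,y₂)/p_π(x,y₁,y₂)) + (1 − p*(x,y₁,y₂))·log((1 − p*(x,y₁,y₂))/(1 − p_π(x,y₁,y₂)))]. Then L_PRA(π) ≥ 0 for every positive policy π and L_PRA(π^τ) = 0; hence π^τ is a global minimizer of L_PRA. -/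
lemma bern_kl_nonneg {p q : ℝ} (hp0 : 0 < p) (hp1 : p < 1) (hq0 : 0 < q) (hq1 : q < 1) :
    0 ≤ p * Real.log (p / q) + (1 - p) * Real.log ((1 - p) / (1 - q)) := by
  have hp1' : 0 < 1 - p := by linarith
  have hq1' : 0 < 1 - q := by linarith
  have h1 : Real.log (q / p) ≤ q / p - 1 := Real.log_le_sub_one_of_pos (by positivity)
  have h2 : Real.log ((1 - q) / (1 - p)) ≤ (1 - q) / (1 - p) - 1 :=
    Real.log_le_sub_one_of_pos (by positivity)
  rw [Real.log_div hq0.ne' hp0.ne'] at h1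
  rw [Real.log_div hq1'.ne' hp1'.ne'] at h2
  rw [Real.log_div hp0.ne' hq0.ne', Real.log_div hp1'.ne' hq1'.ne']
  have e1 : q / p - 1 = (q - p) / p := by field_simp
  have e2 : (1 - q) / (1 - p) - 1 = (p - q) / (1 - p) := by field_simp; ring
  rw [e1] at h1; rw [e2] at h2
  have H1 : p * (Real.log q - Real.log p) ≤ q - p := by
    have := mul_le_mul_of_nonneg_left h1 hp0.le
    rwa [mul_div_cancel₀ _ hp0.ne'] at this
  have H2 : (1 - p) * (Real.log (1 - q) - Real.log (1 - p)) ≤ p - q := by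
    have := mul_le_mul_of_nonneg_left h2 hp1'.le
    rwa [mul_div_cancel₀ _ hp1'.ne'] at this
  nlinarith

/-- The Preference-Reward-Approximation (PRA) loss, built from any
comparison model ω with values in (0,1) satisfying the symmetric complementarity
property ω(a,b) = 1 − ω(b,a), is nonnegative for every positive policy and vanishes
at the Boltzmann policy π^τ; hence π^τ is a global minimizer of L_PRA. -/
theorem pra_target_distribution
    {X Y : Type*} [Fintype X] [Fintype Y] [Nonempty X] [Nonempty Y]
    (r : X → Y → ℝ) (τ : ℝ) (hτ : 0 < τ)
    (D : X → ℝ) (hD0 : ∀ x, 0 ≤ D x) (hD1 : ∑ x : X, D x = 1)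
    (ω : ℝ → ℝ → ℝ)
    (hω0 : ∀ a b, 0 < ω a b) (hω1 : ∀ a b, ω a b < 1)
    (hωsym : ∀ a b, ω a b = 1 - ω b a)
    (Z : X → ℝ) (hZ : ∀ x, Z x = ∑ y' : Y, Real.exp (τ * r x y'))
    (πt : X → Y → ℝ)
    (hπt : ∀ x y, πt x y = Real.exp (τ * r x y) / Z x)
    (pstar : X → Y → Y → ℝ)
    (hpstar : ∀ x y₁ y₂, pstar x y₁ y₂ = ω (r x y₁) (r x y₂))
    (rimp : (X → Y → ℝ) → X → Y → ℝ)
    (hrimp : ∀ p x y, rimp p x y = (1 / τ) * Real.log (Z x * p x y))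
    (pmod : (X → Y → ℝ) → X → Y → Y → ℝ)
    (hpmod : ∀ p x y₁ y₂, pmod p x y₁ y₂ = ω (rimp p x y₁) (rimp p x y₂))
    (LPRA : (X → Y → ℝ) → ℝ)
    (hLPRA : ∀ p : X → Y → ℝ,
      LPRA p = ∑ x : X, D x * ∑ y₁ : Y, ∑ y₂ : Y,
        p x y₁ * p x y₂ *
          (pstar x y₁ y₂ * Real.log (pstar x y₁ y₂ / pmod p x y₁ y₂) +
           (1 - pstar x y₁ y₂) *
             Real.log ((1 - pstar x y₁ y₂) / (1 - pmod p x y₁ y₂)))) :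
    (∀ π : X → Y → ℝ, (∀ x y, 0 < π x y) → (∀ x, ∑ y : Y, π x y = 1) →
      0 ≤ LPRA π) ∧
    LPRA πt = 0 := by
  have hZpos : ∀ x, 0 < Z x := by
    intro x
    rw [hZ]
    exact Finset.sum_pos (fun y _ => Real.exp_pos _) Finset.univ_nonempty
  constructor
  · intro π hπpos hπsum
    rw [hLPRA]
    apply Finset.sum_nonneg
    intro x _
    apply mul_nonneg (hD0 x)
    apply Finset.sum_nonneg; intro y₁ _
    apply Finset.sum_nonneg; intro y₂ _
    apply mul_nonneg (mul_nonneg (hπpos x y₁).le (hπpos x y₂).le)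
    have hp0 := hω0 (r x y₁) (r x y₂)
    have hp1 := hω1 (r x y₁) (r x y₂)
    have hq0 := hω0 (rimp π x y₁) (rimp π x y₂)
    have hq1 := hω1 (rimp π x y₁) (rimp π x y₂)
    rw [hpstar, hpmod]
    exact bern_kl_nonneg hp0 hp1 hq0 hq1
  · have hr : ∀ x y, rimp πt x y = r x y := by
      intro x y
      rw [hrimp, hπt, mul_div_cancel₀ _ (hZpos x).ne', Real.log_exp]
      field_simp
    rw [hLPRA]
    apply Finset.sum_eq_zero
    intro x _
    rw [mul_eq_zero]; right
    apply Finset.sum_eq_zero; intro y₁ _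
    apply Finset.sum_eq_zero; intro y₂ _
    rw [hpmod, hr, hr, ← hpstar]
    have h0 := hω0 (r x y₁) (r x y₂)
    have h1 := hω1 (r x y₁) (r x y₂)
    rw [hpstar] at *
    rw [div_self h0.ne', div_self (by linarith : (1:ℝ) - ω (r x y₁) (r x y₂) ≠ 0), Real.log_one]
    ring
end

section
/- Define the posterior Reward-Approximation loss of a positive policy π by L_RA-P(π) = Σ_{x∈X} 𝒟(x) · Σ_{y∈Y} π(y|x) · ((1/τ)·log(Z'(x)·π(y|x)/π_ref(y|x)) − r(x,y))². Then L_RA-P(π) ≥ 0 for every positive policy π, L_RA-P(π̄^τ) = 0, and L_RA-P(π) = 0 implies π(·|x) = π̄^τ(·|x) for every x with 𝒟(x) > 0; hence π̄^τ is the minimizer of L_RA-P. -/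
/-- The posterior Reward-Approximation loss is nonnegative, vanishes at
the posterior Boltzmann policy π̄^τ, and vanishing forces π(·|x) = π̄^τ(·|x) wherever
𝒟(x) > 0; hence π̄^τ is the minimizer of L_RA-P. -/
theorem posterior_reward_approximation_target_distribution
    {X Y : Type*} [Fintype X] [Fintype Y] [Nonempty X] [Nonempty Y]
    (r : X → Y → ℝ) (τ : ℝ) (hτ : 0 < τ)
    (D : X → ℝ) (hD0 : ∀ x, 0 ≤ D x) (hD1 : ∑ x : X, D x = 1)
    (πref : X → Y → ℝ)
    (hπref0 : ∀ x y, 0 < πref x y) (hπref1 : ∀ x, ∑ y : Y, πref x y = 1)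
    (Z' : X → ℝ) (hZ' : ∀ x, Z' x = ∑ y' : Y, πref x y' * Real.exp (τ * r x y'))
    (πbar : X → Y → ℝ)
    (hπbar : ∀ x y, πbar x y = πref x y * Real.exp (τ * r x y) / Z' x)
    (LRAP : (X → Y → ℝ) → ℝ)
    (hLRAP : ∀ p : X → Y → ℝ,
      LRAP p = ∑ x : X, D x * ∑ y : Y,
        p x y * ((1 / τ) * Real.log (Z' x * p x y / πref x y) - r x y) ^ 2) :
    LRAP πbar = 0 ∧
    ∀ π : X → Y → ℝ, (∀ x y, 0 < π x y) → (∀ x, ∑ y : Y, π x y = 1) →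
      0 ≤ LRAP π ∧
      (LRAP π = 0 → ∀ x, 0 < D x → π x = πbar x) := by
  have hZpos : ∀ x, 0 < Z' x := by
    intro x; rw [hZ' x]
    exact Finset.sum_pos (fun y _ => mul_pos (hπref0 x y) (Real.exp_pos _))
      Finset.univ_nonempty
  constructor
  · rw [hLRAP]
    apply Finset.sum_eq_zero
    intro x _
    have hz : ∀ y ∈ Finset.univ,
        πbar x y * ((1 / τ) * Real.log (Z' x * πbar x y / πref x y) - r x y) ^ 2 = 0 := by
      intro y _
      have h1 : Z' x * πbar x y / πref x y = Real.exp (τ * r x y) := by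
        rw [hπbar]
        field_simp [ne_of_gt (hπref0 x y), ne_of_gt (hZpos x)]
      rw [h1, Real.log_exp]
      have : (1 / τ) * (τ * r x y) - r x y = 0 := by
        field_simp
        ring
      rw [this]
      ring
    rw [Finset.sum_eq_zero hz, mul_zero]
  · intro π hπ0 hπ1
    have hterm : ∀ x y, 0 ≤ π x y * ((1 / τ) * Real.log (Z' x * π x y / πref x y) - r x y) ^ 2 :=
      fun x y => mul_nonneg (hπ0 x y).le (sq_nonneg _)
    have houter : ∀ x, 0 ≤ D x * ∑ y : Y,
        π x y * ((1 / τ) * Real.log (Z' x * π x y / πref x y) - r x y) ^ 2 :=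
      fun x => mul_nonneg (hD0 x) (Finset.sum_nonneg fun y _ => hterm x y)
    constructor
    · rw [hLRAP]
      exact Finset.sum_nonneg fun x _ => houter x
    · intro hL x hDx
      rw [hLRAP] at hL
      have hx := (Finset.sum_eq_zero_iff_of_nonneg (fun x _ => houter x)).mp hL x
        (Finset.mem_univ x)
      have hin : ∑ y : Y,
          π x y * ((1 / τ) * Real.log (Z' x * π x y / πref x y) - r x y) ^ 2 = 0 := by
        rcases mul_eq_zero.mp hx with h | h
        · exact absurd h (ne_of_gt hDx)
        · exact h
      funext y
      have hy := (Finset.sum_eq_zero_iff_of_nonneg (fun y _ => hterm x y)).mp hin y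
        (Finset.mem_univ y)
      have hsq : ((1 / τ) * Real.log (Z' x * π x y / πref x y) - r x y) ^ 2 = 0 := by
        rcases mul_eq_zero.mp hy with h | h
        · exact absurd h (ne_of_gt (hπ0 x y))
        · exact h
      have hdiff : (1 / τ) * Real.log (Z' x * π x y / πref x y) - r x y = 0 :=
        pow_eq_zero_iff (two_ne_zero) |>.mp hsq
      have hlog : Real.log (Z' x * π x y / πref x y) = τ * r x y := by
        have hτ' : τ ≠ 0 := ne_of_gt hτ
        field_simp at hdiff
        linarith
      have hexp : Z' x * π x y / πref x y = Real.exp (τ * r x y) := by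
        rw [← hlog, Real.exp_log]
        exact div_pos (mul_pos (hZpos x) (hπ0 x y)) (hπref0 x y)
      rw [hπbar]
      have hpr : πref x y ≠ 0 := ne_of_gt (hπref0 x y)
      have hzz : Z' x ≠ 0 := ne_of_gt (hZpos x)
      field_simp at hexp ⊢
      linarith
end

section
/- Let ω : ℝ × ℝ → (0,1) satisfy ω(a,b) = 1 − ω(b,a) for all a, b. Define p*(x,y₁,y₂) = ω(r(x,y₁), r(x,y₂)), the posterior implicit reward of a positive policy π by r̄_π(x,y) = (1/τ)·log(Z'(x)·π(y|x)/π_ref(y|x)), the model comparison probability p̄_π(x,y₁,y₂) = ω(r̄_π(x,y₁), r̄_π(x,y₂)), and the PRA-P loss L_PRA-P(π) = Σ_{x∈X} 𝒟(x) · Σ_{y₁,y₂∈Y} π(y₁|x)·π(y₂|x) · [p*(x,y₁,y₂)·log(p*(x,y₁,y₂)/p̄_π(x,y₁,y₂)) + (1 − p*(x,y₁,y₂))·log((1 − p*(x,y₁,y₂))/(1 − p̄_π(x,y₁,y₂)))]. Then L_PRA-P(π) ≥ 0 for every positive policy π and L_PRA-P(π̄^τ) = 0; hence π̄^τ is a global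 minimizer of L_PRA-P. -/
lemma kl2_nonneg {a b : ℝ} (ha0 : 0 < a) (ha1 : a < 1) (hb0 : 0 < b) (hb1 : b < 1) :
    0 ≤ a * Real.log (a / b) + (1 - a) * Real.log ((1 - a) / (1 - b)) := by
  have hna : a ≠ 0 := ha0.ne'
  have hna1 : (1:ℝ) - a ≠ 0 := by linarith
  have h1 : Real.log (b / a) ≤ b / a - 1 := Real.log_le_sub_one_of_pos (div_pos hb0 ha0)
  have h2 : Real.log ((1 - b) / (1 - a)) ≤ (1 - b) / (1 - a) - 1 :=
    Real.log_le_sub_one_of_pos (div_pos (by linarith) (by linarith))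
  have e1 : Real.log (a / b) = Real.log a - Real.log b := Real.log_div ha0.ne' hb0.ne'
  have e2 : Real.log (b / a) = Real.log b - Real.log a := Real.log_div hb0.ne' ha0.ne'
  have e3 : Real.log ((1 - a) / (1 - b)) = Real.log (1 - a) - Real.log (1 - b) :=
    Real.log_div (by linarith) (by linarith)
  have e4 : Real.log ((1 - b) / (1 - a)) = Real.log (1 - b) - Real.log (1 - a) :=
    Real.log_div (by linarith) (by linarith)
  have m1 := mul_le_mul_of_nonneg_left h1 ha0.le
  have m2 := mul_le_mul_of_nonneg_left h2 (by linarith : (0:ℝ) ≤ 1 - a)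
  have ha' : a * (b / a - 1) = b - a := by field_simp
  have hb' : (1 - a) * ((1 - b) / (1 - a) - 1) = a - b := by
    field_simp
    ring
  rw [e1, e3]; rw [e2] at m1; rw [e4] at m2; rw [ha'] at m1; rw [hb'] at m2
  nlinarith

/-- The posterior Preference-Reward-Approximation (PRA-P) loss, built
from any comparison model ω with values in (0,1) satisfying ω(a,b) = 1 − ω(b,a), is
nonnegative for every positive policy and vanishes at the posterior Boltzmann policy
π̄^τ; hence π̄^τ is a global minimizer of L_PRA-P. -/
theorem prap_target_distribution
    {X Y : Type*} [Fintype X] [Fintype Y] [Nonempty X] [Nonempty Y]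
    (r : X → Y → ℝ) (τ : ℝ) (hτ : 0 < τ)
    (D : X → ℝ) (hD0 : ∀ x, 0 ≤ D x) (hD1 : ∑ x : X, D x = 1)
    (πref : X → Y → ℝ)
    (hπref0 : ∀ x y, 0 < πref x y) (hπref1 : ∀ x, ∑ y : Y, πref x y = 1)
    (ω : ℝ → ℝ → ℝ)
    (hω0 : ∀ a b, 0 < ω a b) (hω1 : ∀ a b, ω a b < 1)
    (hωsym : ∀ a b, ω a b = 1 - ω b a)
    (Z' : X → ℝ) (hZ' : ∀ x, Z' x = ∑ y' : Y, πref x y' * Real.exp (τ * r x y'))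
    (πbar : X → Y → ℝ)
    (hπbar : ∀ x y, πbar x y = πref x y * Real.exp (τ * r x y) / Z' x)
    (pstar : X → Y → Y → ℝ)
    (hpstar : ∀ x y₁ y₂, pstar x y₁ y₂ = ω (r x y₁) (r x y₂))
    (rbar : (X → Y → ℝ) → X → Y → ℝ)
    (hrbar : ∀ p x y, rbar p x y = (1 / τ) * Real.log (Z' x * p x y / πref x y))
    (pbar : (X → Y → ℝ) → X → Y → Y → ℝ)
    (hpbar : ∀ p x y₁ y₂, pbar p x y₁ y₂ = ω (rbar p x y₁) (rbar p x y₂))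
    (LPRAP : (X → Y → ℝ) → ℝ)
    (hLPRAP : ∀ p : X → Y → ℝ,
      LPRAP p = ∑ x : X, D x * ∑ y₁ : Y, ∑ y₂ : Y,
        p x y₁ * p x y₂ *
          (pstar x y₁ y₂ * Real.log (pstar x y₁ y₂ / pbar p x y₁ y₂) +
           (1 - pstar x y₁ y₂) *
             Real.log ((1 - pstar x y₁ y₂) / (1 - pbar p x y₁ y₂)))) :
    (∀ π : X → Y → ℝ, (∀ x y, 0 < π x y) → (∀ x, ∑ y : Y, π x y = 1) →
      0 ≤ LPRAP π) ∧
    LPRAP πbar = 0 := by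

  have hZpos : ∀ x, 0 < Z' x := by
    intro x
    rw [hZ' x]
    exact Finset.sum_pos (fun y _ => mul_pos (hπref0 x y) (Real.exp_pos _))
      Finset.univ_nonempty
  constructor
  · intro π hπ0 hπ1
    rw [hLPRAP]
    apply Finset.sum_nonneg
    intro x _
    apply mul_nonneg (hD0 x)
    apply Finset.sum_nonneg; intro y₁ _
    apply Finset.sum_nonneg; intro y₂ _
    apply mul_nonneg (mul_nonneg (hπ0 x y₁).le (hπ0 x y₂).le)
    rw [hpstar, hpbar]
    exact kl2_nonneg (hω0 _ _) (hω1 _ _) (hω0 _ _) (hω1 _ _)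
  · have hrb : ∀ x y, rbar πbar x y = r x y := by
      intro x y
      rw [hrbar, hπbar]
      have : Z' x * (πref x y * Real.exp (τ * r x y) / Z' x) / πref x y
          = Real.exp (τ * r x y) := by
        have h1 := (hZpos x).ne'
        have h2 := (hπref0 x y).ne'
        field_simp
      rw [this, Real.log_exp]
      field_simp
    rw [hLPRAP]
    apply Finset.sum_eq_zero
    intro x _
    have : ∀ y₁ ∈ (Finset.univ : Finset Y), ∑ y₂ : Y,
        πbar x y₁ * πbar x y₂ *
          (pstar x y₁ y₂ * Real.log (pstar x y₁ y₂ / pbar πbar x y₁ y₂) +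
           (1 - pstar x y₁ y₂) *
             Real.log ((1 - pstar x y₁ y₂) / (1 - pbar πbar x y₁ y₂))) = 0 := by
      intro y₁ _
      apply Finset.sum_eq_zero
      intro y₂ _
      have hpb : pbar πbar x y₁ y₂ = pstar x y₁ y₂ := by
        rw [hpbar, hpstar, hrb, hrb]
      have h0 : (0:ℝ) < pstar x y₁ y₂ := by rw [hpstar]; exact hω0 _ _
      have h1 : pstar x y₁ y₂ < 1 := by rw [hpstar]; exact hω1 _ _
      rw [hpb, div_self h0.ne', div_self (by linarith : (1:ℝ) - pstar x y₁ y₂ ≠ 0),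
        Real.log_one]
      ring
    rw [Finset.sum_congr rfl this]
    simp
end

section
/- Under the Bradley–Terry model p*(x,y₁,y₂) = σ(r(x,y₁) − r(x,y₂)), define for a positive policy π: h̄_π(x,y₁,y₂) = (1/τ)·(log(π(y₁|x)/π_ref(y₁|x)) − log(π(y₂|x)/π_ref(y₂|x))), the per-pair term ζ(π;x,y₁,y₂) = p*(x,y₁,y₂)·log σ(h̄_π(x,y₁,y₂)) + (1 − p*(x,y₁,y₂))·log σ(−h̄_π(x,y₁,y₂)), the entropy term M(x,y₁,y₂) = p*·log p* + (1 − p*)·log(1 − p*), the DPO loss L_DPO(π) = −Σ_{x∈X} 𝒟(x) Σ_{y₁,y₂∈Y} π₀(y₁|x)·π₀(y₂|x)·ζ(π;x,y₁,y₂), the PRA-P loss L_PRA-P(π) = Σ_{x∈X} 𝒟(x) Σ_{y₁,y₂∈Y} π(y₁|x)·π(y₂|x)·[p*·log(p*/σ(h̄_π(x,y₁,y₂))) + (1 − p*)·log((1 − p*)/σ(−h̄_π(x,y₁,y₂)))], the shift term η₁(π,π₀) = Σ_{x∈X} 𝒟(x) Σ_{y₁,y₂∈Y} (π₀(y₁|x)·π₀(y₂|x)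 − π(y₁|x)·π(y₂|x))·ζ(π;x,y₁,y₂), and the regularization term η₂(π) = Σ_{x∈X} 𝒟(x) Σ_{y₁,y₂∈Y} π(y₁|x)·π(y₂|x)·M(x,y₁,y₂). Then for every positive policy π the identity L_PRA-P(π) = L_DPO(π) + η₁(π,π₀) + η₂(π) holds, and η₁(π,π₀) = 0 whenever π = π₀. -/
/-- Under the Bradley–Terry model, the PRA-P loss decomposes as
L_PRA-P(π) = L_DPO(π) + η₁(π,π₀) + η₂(π), where η₁ is the distribution-shift term
(vanishing when π = π₀) and η₂ is the entropy regularization term. -/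
theorem prap_dpo_decomposition
    {X Y : Type*} [Fintype X] [Fintype Y] [Nonempty X] [Nonempty Y]
    (r : X → Y → ℝ) (τ : ℝ) (hτ : 0 < τ)
    (D : X → ℝ) (hD0 : ∀ x, 0 ≤ D x) (hD1 : ∑ x : X, D x = 1)
    (πref π₀ : X → Y → ℝ)
    (hπref0 : ∀ x y, 0 < πref x y) (hπref1 : ∀ x, ∑ y : Y, πref x y = 1)
    (hπ₀0 : ∀ x y, 0 < π₀ x y) (hπ₀1 : ∀ x, ∑ y : Y, π₀ x y = 1)
    (σ : ℝ → ℝ) (hσ : ∀ t, σ t = (1 + Real.exp (-t))⁻¹)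
    (pstar : X → Y → Y → ℝ)
    (hpstar : ∀ x y₁ y₂, pstar x y₁ y₂ = σ (r x y₁ - r x y₂))
    (hbar : (X → Y → ℝ) → X → Y → Y → ℝ)
    (hhbar : ∀ p x y₁ y₂, hbar p x y₁ y₂ =
      (1 / τ) * (Real.log (p x y₁ / πref x y₁) - Real.log (p x y₂ / πref x y₂)))
    (ζ : (X → Y → ℝ) → X → Y → Y → ℝ)
    (hζ : ∀ p x y₁ y₂, ζ p x y₁ y₂ =
      pstar x y₁ y₂ * Real.log (σ (hbar p x y₁ y₂)) +
      (1 - pstar x y₁ y₂) * Real.log (σ (-(hbar p x y₁ y₂))))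
    (M : X → Y → Y → ℝ)
    (hM : ∀ x y₁ y₂, M x y₁ y₂ =
      pstar x y₁ y₂ * Real.log (pstar x y₁ y₂) +
      (1 - pstar x y₁ y₂) * Real.log (1 - pstar x y₁ y₂))
    (LDPO : (X → Y → ℝ) → ℝ)
    (hLDPO : ∀ p : X → Y → ℝ,
      LDPO p = -∑ x : X, D x * ∑ y₁ : Y, ∑ y₂ : Y,
        π₀ x y₁ * π₀ x y₂ * ζ p x y₁ y₂)
    (LPRAP : (X → Y → ℝ) → ℝ)
    (hLPRAP : ∀ p : X → Y → ℝ,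
      LPRAP p = ∑ x : X, D x * ∑ y₁ : Y, ∑ y₂ : Y,
        p x y₁ * p x y₂ *
          (pstar x y₁ y₂ * Real.log (pstar x y₁ y₂ / σ (hbar p x y₁ y₂)) +
           (1 - pstar x y₁ y₂) *
             Real.log ((1 - pstar x y₁ y₂) / σ (-(hbar p x y₁ y₂)))))
    (η₁ : (X → Y → ℝ) → ℝ)
    (hη₁ : ∀ p : X → Y → ℝ,
      η₁ p = ∑ x : X, D x * ∑ y₁ : Y, ∑ y₂ : Y,
        (π₀ x y₁ * π₀ x y₂ - p x y₁ * p x y₂) * ζ p x y₁ y₂)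
    (η₂ : (X → Y → ℝ) → ℝ)
    (hη₂ : ∀ p : X → Y → ℝ,
      η₂ p = ∑ x : X, D x * ∑ y₁ : Y, ∑ y₂ : Y,
        p x y₁ * p x y₂ * M x y₁ y₂) :
    (∀ π : X → Y → ℝ, (∀ x y, 0 < π x y) → (∀ x, ∑ y : Y, π x y = 1) →
      LPRAP π = LDPO π + η₁ π + η₂ π) ∧
    η₁ π₀ = 0 := by
  have hσpos : ∀ t, 0 < σ t := by
    intro t; rw [hσ]; positivity
  have hσlt : ∀ t, σ t < 1 := by
    intro t; rw [hσ]
    rw [inv_lt_one₀ (by positivity)]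
    linarith [Real.exp_pos (-t)]
  constructor
  · intro π hπ0 hπ1
    rw [hLPRAP, hLDPO, hη₁, hη₂]
    have key : ∀ x y₁ y₂ : _,
        π x y₁ * π x y₂ *
          (pstar x y₁ y₂ * Real.log (pstar x y₁ y₂ / σ (hbar π x y₁ y₂)) +
           (1 - pstar x y₁ y₂) *
             Real.log ((1 - pstar x y₁ y₂) / σ (-(hbar π x y₁ y₂)))) =
        -(π₀ x y₁ * π₀ x y₂ * ζ π x y₁ y₂) +
          ((π₀ x y₁ * π₀ x y₂ - π x y₁ * π x y₂) * ζ π x y₁ y₂ +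
            π x y₁ * π x y₂ * M x y₁ y₂) := by
      intro x y₁ y₂
      have hp0 : 0 < pstar x y₁ y₂ := by rw [hpstar]; exact hσpos _
      have hp1 : pstar x y₁ y₂ < 1 := by rw [hpstar]; exact hσlt _
      rw [hζ, hM, Real.log_div hp0.ne' (hσpos _).ne',
        Real.log_div (by linarith : (1 : ℝ) - pstar x y₁ y₂ ≠ 0) (hσpos _).ne']
      ring
    rw [← Finset.sum_neg_distrib, ← Finset.sum_add_distrib, ← Finset.sum_add_distrib]
    refine Finset.sum_congr rfl fun x _ => ?_
    rw [← mul_neg, ← mul_add, ← mul_add]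
    congr 1
    simp only [← Finset.sum_neg_distrib, ← Finset.sum_add_distrib]
    refine Finset.sum_congr rfl fun y₁ _ => Finset.sum_congr rfl fun y₂ _ => ?_
    linarith [key x y₁ y₂]
  · rw [hη₁]
    simp
end

section
/- Consider the DPO loss as a function of the tabular parameter θ : X × Y → ℝ via the softmax parametrization π_θ(y|x) = exp(θ(x,y))/Σ_{y'} exp(θ(x,y')): L_DPO(θ) = −Σ_{x∈X} 𝒟(x) Σ_{y₁,y₂∈Y} π₀(y₁|x)·π₀(y₂|x)·[p*(x,y₁,y₂)·log σ(h̄_θ(x,y₁,y₂)) + (1 − p*(x,y₁,y₂))·log σ(−h̄_θ(x,y₁,y₂))], where h̄_θ(x,y₁,y₂) = (1/τ)·(log(π_θ(y₁|x)/π_ref(y₁|x)) − log(π_θ(y₂|x)/π_ref(y₂|x))) and p*(x,y₁,y₂) = σ(r(x,y₁) − r(x,y₂)). Then L_DPO is (4/τ²)-smooth: for every θ : X × Y → ℝ and every direction z : X × Y → ℝ, the second derivative of L_DPO at θ satisfies |D²L_DPO(θ)(z,z)| ≤ (4/τ²)·Σ_{x,y} z(x,y)². -/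
noncomputable def sig (t : ℝ) : ℝ := (1 + Real.exp (-t))⁻¹

lemma sig_pos (t : ℝ) : 0 < sig t := by
  have : (0:ℝ) < 1 + Real.exp (-t) := by positivity
  exact inv_pos.mpr this

lemma sig_add (t : ℝ) : sig t + sig (-t) = 1 := by
  unfold sig
  rw [neg_neg]
  have h1 : (0:ℝ) < 1 + Real.exp (-t) := by positivity
  have h2 : (0:ℝ) < 1 + Real.exp t := by positivity
  have he : Real.exp (-t) * Real.exp t = 1 := by
    rw [← Real.exp_add]; simp
  field_simp
  nlinarith [he]

lemma hasDerivAt_sig (t : ℝ) : HasDerivAt sig (sig t * sig (-t)) t := by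
  have h0 : (1 + Real.exp (-t)) ≠ 0 := by positivity
  have h1 : HasDerivAt (fun s : ℝ => 1 + Real.exp (-s)) (-Real.exp (-t)) t := by
    have := (Real.hasDerivAt_exp (-t)).comp t (hasDerivAt_neg t)
    simpa using this.const_add 1
  have h2 := h1.inv h0
  refine h2.congr_deriv ?_
  unfold sig
  rw [neg_neg]
  have h2' : (0:ℝ) < 1 + Real.exp t := by positivity
  have h1' : (0:ℝ) < 1 + Real.exp (-t) := by positivity
  have he : Real.exp (-t) * Real.exp t = 1 := by rw [← Real.exp_add]; simp
  field_simp
  nlinarith [he]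

lemma hasDerivAt_logsig (t : ℝ) : HasDerivAt (fun s => Real.log (sig s)) (sig (-t)) t := by
  have h := (hasDerivAt_sig t).log (sig_pos t).ne'
  convert h using 1
  rw [mul_comm, mul_div_assoc, div_self (sig_pos t).ne', mul_one]

noncomputable def gg (p t : ℝ) : ℝ := p * Real.log (sig t) + (1 - p) * Real.log (sig (-t))

lemma hasDerivAt_gg (p t : ℝ) : HasDerivAt (gg p) (p - sig t) t := by
  have h1 := (hasDerivAt_logsig t).const_mul p
  have h2 : HasDerivAt (fun s : ℝ => Real.log (sig (-s))) (-sig t) t := by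
    have := (hasDerivAt_logsig (-t)).comp t (hasDerivAt_neg t)
    simp only [neg_neg, mul_neg, mul_one] at this
    exact this
  have h3 := h1.add (h2.const_mul (1 - p))
  refine h3.congr_deriv ?_
  linear_combination p * sig_add t

lemma sig_mul_nonneg (t : ℝ) : 0 ≤ sig t * sig (-t) :=
  mul_nonneg (sig_pos t).le (sig_pos (-t)).le

lemma sig_mul_le (t : ℝ) : sig t * sig (-t) ≤ 1/4 := by
  nlinarith [sig_add t, sq_nonneg (sig t - sig (-t))]

lemma dpo_aux {ι : Type*} [Fintype ι] {κ : Type*} [Fintype κ]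
    (c P B : κ → ℝ) (A : κ → ((ι → ℝ) →L[ℝ] ℝ))
    (L : (ι → ℝ) → ℝ)
    (hL : ∀ θ, L θ = ∑ q : κ, c q * gg (P q) (A q θ + B q)) :
    ∀ θ z : ι → ℝ, fderiv ℝ (fderiv ℝ L) θ z z
       = ∑ q : κ, c q * (-(sig (A q θ + B q) * sig (-(A q θ + B q)))) * A q z * A q z := by
  have hLe : L = fun θ => ∑ q : κ, c q * gg (P q) (A q θ + B q) := funext hL
  subst hLe
  set L1 : (ι → ℝ) → ((ι → ℝ) →L[ℝ] ℝ) :=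
    fun θ => ∑ q : κ, (c q * (P q - sig (A q θ + B q))) • A q with hL1
  have hderiv1 : ∀ θ, HasFDerivAt (fun θ' => ∑ q : κ, c q * gg (P q) (A q θ' + B q)) (L1 θ) θ := by
    intro θ
    apply HasFDerivAt.fun_sum
    intro q _
    have h := (hasDerivAt_gg (P q) (A q θ + B q)).comp_hasFDerivAt θ
      ((A q).hasFDerivAt.add_const (B q))
    have h2 := h.const_mul (c q)
    simpa [smul_smul] using h2
  have hfd1 : fderiv ℝ (fun θ' => ∑ q : κ, c q * gg (P q) (A q θ' + B q)) = L1 :=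
    funext fun θ => (hderiv1 θ).fderiv
  intro θ z
  rw [hfd1]
  set L2 : (ι → ℝ) →L[ℝ] ((ι → ℝ) →L[ℝ] ℝ) :=
    ∑ q : κ, ((c q * (-(sig (A q θ + B q) * sig (-(A q θ + B q))))) • A q).smulRight (A q) with hL2
  have hderiv2 : HasFDerivAt L1 L2 θ := by
    apply HasFDerivAt.fun_sum
    intro q _
    have hs : HasFDerivAt (fun θ' => sig (A q θ' + B q))
        ((sig (A q θ + B q) * sig (-(A q θ + B q))) • A q) θ :=
      (hasDerivAt_sig (A q θ + B q)).comp_hasFDerivAt (h₂ := sig) (f := fun θ' => A q θ' + B q) θ ((A q).hasFDerivAt.add_const (B q))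
    have hφ : HasFDerivAt (fun θ' => c q * (P q - sig (A q θ' + B q)))
        ((c q * (-(sig (A q θ + B q) * sig (-(A q θ + B q))))) • A q) θ := by
      have h' := (hs.const_sub (P q)).const_mul (c q)
      refine h'.congr_fderiv ?_
      module
    exact hφ.smul_const (A q)
  rw [hderiv2.fderiv]
  simp only [hL2, ContinuousLinearMap.sum_apply, ContinuousLinearMap.smulRight_apply,
    ContinuousLinearMap.coe_smul', Pi.smul_apply, smul_eq_mul, ContinuousLinearMap.smul_apply]

set_option maxHeartbeats 2000000 in


/-- The DPO loss of the softmax-parametrized tabular policy is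
(4/τ²)-smooth: its second derivative satisfies
|D²L_DPO(θ)(z,z)| ≤ (4/τ²)·Σ_{x,y} z(x,y)² for all θ and z. -/
theorem dpo_loss_smooth
    {X Y : Type*} [Fintype X] [Fintype Y] [Nonempty X] [Nonempty Y]
    (r : X → Y → ℝ) (τ : ℝ) (hτ : 0 < τ)
    (D : X → ℝ) (hD0 : ∀ x, 0 ≤ D x) (hD1 : ∑ x : X, D x = 1)
    (πref π₀ : X → Y → ℝ)
    (hπref0 : ∀ x y, 0 < πref x y) (hπref1 : ∀ x, ∑ y : Y, πref x y = 1)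
    (hπ₀0 : ∀ x y, 0 < π₀ x y) (hπ₀1 : ∀ x, ∑ y : Y, π₀ x y = 1)
    (σ : ℝ → ℝ) (hσ : ∀ t, σ t = (1 + Real.exp (-t))⁻¹)
    (pstar : X → Y → Y → ℝ)
    (hpstar : ∀ x y₁ y₂, pstar x y₁ y₂ = σ (r x y₁ - r x y₂))
    (πθ : (X × Y → ℝ) → X → Y → ℝ)
    (hπθ : ∀ θ x y, πθ θ x y = Real.exp (θ (x, y)) / ∑ y' : Y, Real.exp (θ (x, y')))
    (hbar : (X × Y → ℝ) → X → Y → Y → ℝ)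
    (hhbar : ∀ θ x y₁ y₂, hbar θ x y₁ y₂ =
      (1 / τ) * (Real.log (πθ θ x y₁ / πref x y₁) - Real.log (πθ θ x y₂ / πref x y₂)))
    (L : (X × Y → ℝ) → ℝ)
    (hL : ∀ θ, L θ = -∑ x : X, D x * ∑ y₁ : Y, ∑ y₂ : Y,
      π₀ x y₁ * π₀ x y₂ *
        (pstar x y₁ y₂ * Real.log (σ (hbar θ x y₁ y₂)) +
         (1 - pstar x y₁ y₂) * Real.log (σ (-(hbar θ x y₁ y₂))))) :
    ∀ θ z : X × Y → ℝ,
      |fderiv ℝ (fderiv ℝ L) θ z z| ≤ (4 / τ ^ 2) * ∑ p : X × Y, z p ^ 2 := by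
  classical
  have hσ' : σ = sig := funext fun t => by rw [hσ]; rfl
  set c : X × Y × Y → ℝ := fun q => -(D q.1 * (π₀ q.1 q.2.1 * π₀ q.1 q.2.2)) with hc
  set P : X × Y × Y → ℝ := fun q => pstar q.1 q.2.1 q.2.2 with hP
  set B : X × Y × Y → ℝ := fun q =>
    τ⁻¹ * (Real.log (πref q.1 q.2.2) - Real.log (πref q.1 q.2.1)) with hB
  set A : X × Y × Y → ((X × Y → ℝ) →L[ℝ] ℝ) := fun q =>
    τ⁻¹ • (ContinuousLinearMap.proj (R := ℝ) (φ := fun _ : X × Y => ℝ) (q.1, q.2.1)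
         - ContinuousLinearMap.proj (R := ℝ) (φ := fun _ : X × Y => ℝ) (q.1, q.2.2)) with hA
  have hAapp : ∀ (q : X × Y × Y) (v : X × Y → ℝ),
      A q v = τ⁻¹ * (v (q.1, q.2.1) - v (q.1, q.2.2)) := by
    intro q v
    simp [hA, smul_eq_mul]
  have hbar_eq : ∀ (θ : X × Y → ℝ) (q : X × Y × Y),
      hbar θ q.1 q.2.1 q.2.2 = A q θ + B q := by
    intro θ q
    obtain ⟨x, y₁, y₂⟩ := q
    have hS : (0:ℝ) < ∑ y' : Y, Real.exp (θ (x, y')) :=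
      Finset.sum_pos (fun _ _ => Real.exp_pos _) Finset.univ_nonempty
    rw [hhbar, hπθ, hπθ, hAapp]
    rw [Real.log_div (by positivity) (hπref0 x y₁).ne',
        Real.log_div (by positivity) (hπref0 x y₂).ne',
        Real.log_div (Real.exp_pos _).ne' hS.ne',
        Real.log_div (Real.exp_pos _).ne' hS.ne',
        Real.log_exp, Real.log_exp]
    simp only [hB]
    field_simp
    ring
  have hL' : ∀ θ, L θ = ∑ q : X × Y × Y, c q * gg (P q) (A q θ + B q) := by
    intro θ
    rw [hL, Fintype.sum_prod_type]
    rw [← Finset.sum_neg_distrib]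
    apply Finset.sum_congr rfl
    intro x _
    rw [Fintype.sum_prod_type, Finset.mul_sum, ← Finset.sum_neg_distrib]
    apply Finset.sum_congr rfl
    intro y₁ _
    rw [Finset.mul_sum, ← Finset.sum_neg_distrib]
    apply Finset.sum_congr rfl
    intro y₂ _
    have he := hbar_eq θ (x, y₁, y₂)
    simp only at he
    rw [hσ', ← he, hc, hP, gg]
    simp only
    ring
  intro θ z
  rw [dpo_aux c P B A L hL' θ z]
  have hτ2 : (0:ℝ) < τ ^ 2 := by positivity
  have hterm : ∀ q : X × Y × Y,
      |c q * (-(sig (A q θ + B q) * sig (-(A q θ + B q)))) * A q z * A q z|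
      ≤ (1 / (2 * τ ^ 2)) *
        (D q.1 * (π₀ q.1 q.2.1 * π₀ q.1 q.2.2) * (z (q.1, q.2.1) ^ 2 + z (q.1, q.2.2) ^ 2)) := by
    intro q
    set s := sig (A q θ + B q) * sig (-(A q θ + B q)) with hs
    have hs0 : 0 ≤ s := sig_mul_nonneg _
    have hs4 : s ≤ 1/4 := sig_mul_le _
    have hw0 : 0 ≤ D q.1 * (π₀ q.1 q.2.1 * π₀ q.1 q.2.2) :=
      mul_nonneg (hD0 _) (mul_nonneg (hπ₀0 _ _).le (hπ₀0 _ _).le)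
    have heq : c q * (-s) * A q z * A q z
        = (D q.1 * (π₀ q.1 q.2.1 * π₀ q.1 q.2.2)) * (s * (τ⁻¹ * (z (q.1,q.2.1) - z (q.1,q.2.2))) ^ 2) := by
      rw [hAapp, hc]; ring
    rw [heq, abs_of_nonneg (by positivity)]
    have hk : s * (τ⁻¹ * (z (q.1,q.2.1) - z (q.1,q.2.2))) ^ 2
        ≤ (1 / (2 * τ ^ 2)) * (z (q.1, q.2.1) ^ 2 + z (q.1, q.2.2) ^ 2) := by
      have h1 : (τ⁻¹ * (z (q.1,q.2.1) - z (q.1,q.2.2))) ^ 2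
          = (z (q.1,q.2.1) - z (q.1,q.2.2)) ^ 2 / τ ^ 2 := by
        rw [mul_pow, inv_pow]; ring
      rw [h1]
      calc sig ((A q) θ + B q) * sig (-((A q) θ + B q)) * ((z (q.1, q.2.1) - z (q.1, q.2.2)) ^ 2 / τ ^ 2)
          ≤ (1/4) * ((z (q.1, q.2.1) - z (q.1, q.2.2)) ^ 2 / τ ^ 2) :=
            mul_le_mul_of_nonneg_right hs4 (by positivity)
        _ = ((z (q.1, q.2.1) - z (q.1, q.2.2)) ^ 2 / 4) / τ ^ 2 := by ring
        _ ≤ ((2 * (z (q.1, q.2.1) ^ 2 + z (q.1, q.2.2) ^ 2)) / 4) / τ ^ 2 := by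
            gcongr
            nlinarith [sq_nonneg (z (q.1, q.2.1) + z (q.1, q.2.2))]
        _ = 1 / (2 * τ ^ 2) * (z (q.1, q.2.1) ^ 2 + z (q.1, q.2.2) ^ 2) := by ring
    calc (D q.1 * (π₀ q.1 q.2.1 * π₀ q.1 q.2.2)) * (s * (τ⁻¹ * (z (q.1,q.2.1) - z (q.1,q.2.2))) ^ 2)
        ≤ (D q.1 * (π₀ q.1 q.2.1 * π₀ q.1 q.2.2)) *
          ((1 / (2 * τ ^ 2)) * (z (q.1, q.2.1) ^ 2 + z (q.1, q.2.2) ^ 2)) := by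
          exact mul_le_mul_of_nonneg_left hk hw0
      _ = (1 / (2 * τ ^ 2)) *
          (D q.1 * (π₀ q.1 q.2.1 * π₀ q.1 q.2.2) * (z (q.1, q.2.1) ^ 2 + z (q.1, q.2.2) ^ 2)) := by
          ring
  calc |∑ q : X × Y × Y, c q * (-(sig (A q θ + B q) * sig (-(A q θ + B q)))) * A q z * A q z|
      ≤ ∑ q : X × Y × Y, |c q * (-(sig (A q θ + B q) * sig (-(A q θ + B q)))) * A q z * A q z| :=
        Finset.abs_sum_le_sum_abs _ _
    _ ≤ ∑ q : X × Y × Y, (1 / (2 * τ ^ 2)) *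
          (D q.1 * (π₀ q.1 q.2.1 * π₀ q.1 q.2.2) * (z (q.1, q.2.1) ^ 2 + z (q.1, q.2.2) ^ 2)) :=
        Finset.sum_le_sum fun q _ => hterm q
    _ = (1 / (2 * τ ^ 2)) * ∑ q : X × Y × Y,
          (D q.1 * (π₀ q.1 q.2.1 * π₀ q.1 q.2.2) * (z (q.1, q.2.1) ^ 2 + z (q.1, q.2.2) ^ 2)) := by
        rw [Finset.mul_sum]
    _ ≤ (4 / τ ^ 2) * ∑ p : X × Y, z p ^ 2 := by
        have hsum : ∑ q : X × Y × Y,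
            (D q.1 * (π₀ q.1 q.2.1 * π₀ q.1 q.2.2) * (z (q.1, q.2.1) ^ 2 + z (q.1, q.2.2) ^ 2))
            = ∑ x : X, D x * (2 * ∑ y : Y, π₀ x y * z (x, y) ^ 2) := by
          rw [Fintype.sum_prod_type]
          apply Finset.sum_congr rfl
          intro x _
          rw [Fintype.sum_prod_type]
          have e1 : ∀ y₁ : Y, ∑ y₂ : Y, D x * (π₀ x y₁ * π₀ x y₂) * (z (x, y₁) ^ 2 + z (x, y₂) ^ 2)
              = D x * π₀ x y₁ * z (x, y₁) ^ 2
                + D x * π₀ x y₁ * ∑ y : Y, π₀ x y * z (x, y) ^ 2 := by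
            intro y₁
            have e0 : ∀ y₂ : Y, D x * (π₀ x y₁ * π₀ x y₂) * (z (x, y₁) ^ 2 + z (x, y₂) ^ 2)
                = (D x * π₀ x y₁ * z (x, y₁) ^ 2) * π₀ x y₂
                  + (D x * π₀ x y₁) * (π₀ x y₂ * z (x, y₂) ^ 2) := fun y₂ => by ring
            rw [Finset.sum_congr rfl (fun y₂ _ => e0 y₂), Finset.sum_add_distrib,
              ← Finset.mul_sum, ← Finset.mul_sum, hπ₀1, mul_one]
          rw [Finset.sum_congr rfl (fun y₁ _ => e1 y₁), Finset.sum_add_distrib]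
          have f1 : ∑ y₁ : Y, D x * π₀ x y₁ * z (x, y₁) ^ 2
              = D x * ∑ y : Y, π₀ x y * z (x, y) ^ 2 := by
            rw [Finset.mul_sum]; exact Finset.sum_congr rfl fun y _ => by ring
          have f2 : ∑ y₁ : Y, D x * π₀ x y₁ * (∑ y : Y, π₀ x y * z (x, y) ^ 2)
              = D x * ∑ y : Y, π₀ x y * z (x, y) ^ 2 := by
            have f3 : ∑ y₁ : Y, D x * π₀ x y₁ * (∑ y : Y, π₀ x y * z (x, y) ^ 2)
                = (D x * ∑ y : Y, π₀ x y * z (x, y) ^ 2) * ∑ y₁ : Y, π₀ x y₁ := by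
              rw [Finset.mul_sum]; exact Finset.sum_congr rfl fun y _ => by ring
            rw [f3, hπ₀1, mul_one]
          rw [f1, f2]; ring
        have hbound : ∀ x : X, D x * (2 * ∑ y : Y, π₀ x y * z (x, y) ^ 2)
            ≤ 2 * ∑ y : Y, z (x, y) ^ 2 := by
          intro x
          have hD1x : D x ≤ 1 := by
            have h := Finset.single_le_sum (f := D) (fun i _ => hD0 i) (Finset.mem_univ x)
            rwa [hD1] at h
          have hS : ∑ y : Y, π₀ x y * z (x, y) ^ 2 ≤ ∑ y : Y, z (x, y) ^ 2 := by
            apply Finset.sum_le_sum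
            intro y _
            have hπle : π₀ x y ≤ 1 := by
              have h := Finset.single_le_sum (f := π₀ x) (fun i _ => (hπ₀0 x i).le)
                (Finset.mem_univ y)
              rwa [hπ₀1] at h
            nlinarith [sq_nonneg (z (x, y))]
          have hS0 : 0 ≤ ∑ y : Y, π₀ x y * z (x, y) ^ 2 :=
            Finset.sum_nonneg fun y _ => mul_nonneg (hπ₀0 x y).le (sq_nonneg _)
          nlinarith [hD0 x]
        rw [hsum]
        have step1 : (1 / (2 * τ ^ 2)) * ∑ x : X, D x * (2 * ∑ y : Y, π₀ x y * z (x, y) ^ 2)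
            ≤ (1 / (2 * τ ^ 2)) * ∑ x : X, 2 * ∑ y : Y, z (x, y) ^ 2 :=
          mul_le_mul_of_nonneg_left (Finset.sum_le_sum fun x _ => hbound x) (by positivity)
        have step2 : (1 / (2 * τ ^ 2)) * ∑ x : X, 2 * ∑ y : Y, z (x, y) ^ 2
            ≤ (4 / τ ^ 2) * ∑ p : X × Y, z p ^ 2 := by
          rw [Fintype.sum_prod_type, ← Finset.mul_sum]
          have hT : (0:ℝ) ≤ ∑ x : X, ∑ y : Y, z (x, y) ^ 2 :=
            Finset.sum_nonneg fun x _ => Finset.sum_nonneg fun y _ => sq_nonneg _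
          have hco : (1 / (2 * τ ^ 2)) * 2 ≤ 4 / τ ^ 2 := by
            rw [div_mul_eq_mul_div, div_le_div_iff₀ (by positivity) hτ2]
            nlinarith
          calc (1 / (2 * τ ^ 2)) * (2 * ∑ x : X, ∑ y : Y, z (x, y) ^ 2)
              = ((1 / (2 * τ ^ 2)) * 2) * ∑ x : X, ∑ y : Y, z (x, y) ^ 2 := by ring
            _ ≤ (4 / τ ^ 2) * ∑ x : X, ∑ y : Y, z (x, y) ^ 2 :=
                mul_le_mul_of_nonneg_right hco hT
        exact le_trans step1 step2
end

section
/- Consider the DPO loss L_DPO(θ) of the softmax-parametrized policy π_θ under the Bradley–Terry model p*(x,y₁,y₂) = σ(r(x,y₁) − r(x,y₂)), namely L_DPO(θ) = −Σ_{x∈X} 𝒟(x) Σ_{y₁,y₂∈Y} π₀(y₁|x)·π₀(y₂|x)·[p*(x,y₁,y₂)·log σ(h̄_θ(x,y₁,y₂)) + (1 − p*(x,y₁,y₂))·log σ(−h̄_θ(x,y₁,y₂))], where h̄_θ(x,y₁,y₂) = (1/τ)·(log(π_θ(y₁|x)/π_ref(y₁|x)) − log(π_θ(y₂|x)/π_ref(y₂|x))).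 If θ* : X × Y → ℝ satisfies π_{θ*}(y|x) = π̄^τ(y|x) for all x ∈ X and y ∈ Y (for instance θ*(x,y) = log π_ref(y|x) + τ·r(x,y)), then the gradient of L_DPO vanishes at θ*: D L_DPO(θ*) = 0. -/
private lemma gibbs {p q : ℝ} (hp0 : 0 < p) (hp1 : p < 1) (hq0 : 0 < q) (hq1 : q < 1) :
    p * Real.log q + (1 - p) * Real.log (1 - q) ≤
      p * Real.log p + (1 - p) * Real.log (1 - p) := by
  have h1 : Real.log (q / p) ≤ q / p - 1 := Real.log_le_sub_one_of_pos (by positivity)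
  have h2 : Real.log ((1 - q) / (1 - p)) ≤ (1 - q) / (1 - p) - 1 :=
    Real.log_le_sub_one_of_pos (by apply div_pos <;> linarith)
  have e1 : p * Real.log (q / p) ≤ q - p := by
    calc p * Real.log (q / p) ≤ p * (q / p - 1) :=
          mul_le_mul_of_nonneg_left h1 hp0.le
      _ = q - p := by field_simp
  have e2 : (1 - p) * Real.log ((1 - q) / (1 - p)) ≤ (1 - q) - (1 - p) := by
    calc (1 - p) * Real.log ((1 - q) / (1 - p)) ≤ (1 - p) * ((1 - q) / (1 - p) - 1) :=
          mul_le_mul_of_nonneg_left h2 (by linarith)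
      _ = (1 - q) - (1 - p) := by
          rw [mul_sub, mul_div_cancel₀ _ (by linarith : (1:ℝ) - p ≠ 0)]; ring
  rw [Real.log_div hq0.ne' hp0.ne'] at e1
  rw [Real.log_div (by linarith) (by linarith : (1:ℝ) - p ≠ 0)] at e2
  nlinarith [e1, e2]


/-- If the softmax-parametrized policy at θ* equals the posterior
Boltzmann policy π̄^τ, then the gradient of the DPO loss vanishes at θ*. -/
theorem dpo_gradient_vanishes_at_posterior_boltzmann
    {X Y : Type*} [Fintype X] [Fintype Y] [Nonempty X] [Nonempty Y]
    (r : X → Y → ℝ) (τ : ℝ) (hτ : 0 < τ)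
    (D : X → ℝ) (hD0 : ∀ x, 0 ≤ D x) (hD1 : ∑ x : X, D x = 1)
    (πref π₀ : X → Y → ℝ)
    (hπref0 : ∀ x y, 0 < πref x y) (hπref1 : ∀ x, ∑ y : Y, πref x y = 1)
    (hπ₀0 : ∀ x y, 0 < π₀ x y) (hπ₀1 : ∀ x, ∑ y : Y, π₀ x y = 1)
    (σ : ℝ → ℝ) (hσ : ∀ t, σ t = (1 + Real.exp (-t))⁻¹)
    (pstar : X → Y → Y → ℝ)
    (hpstar : ∀ x y₁ y₂, pstar x y₁ y₂ = σ (r x y₁ - r x y₂))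
    (πθ : (X × Y → ℝ) → X → Y → ℝ)
    (hπθ : ∀ θ x y, πθ θ x y = Real.exp (θ (x, y)) / ∑ y' : Y, Real.exp (θ (x, y')))
    (hbar : (X × Y → ℝ) → X → Y → Y → ℝ)
    (hhbar : ∀ θ x y₁ y₂, hbar θ x y₁ y₂ =
      (1 / τ) * (Real.log (πθ θ x y₁ / πref x y₁) - Real.log (πθ θ x y₂ / πref x y₂)))
    (L : (X × Y → ℝ) → ℝ)
    (hL : ∀ θ, L θ = -∑ x : X, D x * ∑ y₁ : Y, ∑ y₂ : Y,
      π₀ x y₁ * π₀ x y₂ *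
        (pstar x y₁ y₂ * Real.log (σ (hbar θ x y₁ y₂)) +
         (1 - pstar x y₁ y₂) * Real.log (σ (-(hbar θ x y₁ y₂)))))
    (Z' : X → ℝ) (hZ' : ∀ x, Z' x = ∑ y' : Y, πref x y' * Real.exp (τ * r x y'))
    (πbar : X → Y → ℝ)
    (hπbar : ∀ x y, πbar x y = πref x y * Real.exp (τ * r x y) / Z' x)
    (θstar : X × Y → ℝ)
    (hθstar : ∀ x y, πθ θstar x y = πbar x y) :
    fderiv ℝ L θstar = 0 := by
  -- basic facts about σ
  have hσ0 : ∀ t, 0 < σ t := by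
    intro t; rw [hσ]; positivity
  have hσ1 : ∀ t, σ t < 1 := by
    intro t; rw [hσ]
    rw [inv_lt_one_iff₀]
    right
    nlinarith [Real.exp_pos (-t)]
  have hσneg : ∀ t, σ (-t) = 1 - σ t := by
    intro t; rw [hσ, hσ, neg_neg]
    have h1 : (0:ℝ) < 1 + Real.exp (-t) := by positivity
    have h2 : (0:ℝ) < 1 + Real.exp t := by positivity
    have he : Real.exp t * Real.exp (-t) = 1 := by
      rw [← Real.exp_add]; simp
    field_simp
    nlinarith [he]
  have hZpos : ∀ x, 0 < Z' x := by
    intro x; rw [hZ']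
    exact Finset.sum_pos (fun y _ => mul_pos (hπref0 x y) (Real.exp_pos _)) Finset.univ_nonempty
  -- hbar at θstar
  have hstar : ∀ x y₁ y₂, hbar θstar x y₁ y₂ = r x y₁ - r x y₂ := by
    intro x y₁ y₂
    have key : ∀ y, Real.log (πθ θstar x y / πref x y) = τ * r x y - Real.log (Z' x) := by
      intro y
      rw [hθstar, hπbar]
      have : πref x y * Real.exp (τ * r x y) / Z' x / πref x y
          = Real.exp (τ * r x y) / Z' x := by
        rw [div_div, mul_comm (Z' x), ← div_div,
          mul_div_cancel_left₀ _ (hπref0 x y).ne']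
      rw [this, Real.log_div (Real.exp_pos _).ne' (hZpos x).ne', Real.log_exp]
    rw [hhbar, key, key]
    field_simp
    ring
  -- θstar is a global minimum of L
  have hmin : ∀ θ, L θstar ≤ L θ := by
    intro θ
    rw [hL, hL, neg_le_neg_iff]
    apply Finset.sum_le_sum
    intro x _
    apply mul_le_mul_of_nonneg_left _ (hD0 x)
    apply Finset.sum_le_sum
    intro y₁ _
    apply Finset.sum_le_sum
    intro y₂ _
    apply mul_le_mul_of_nonneg_left _ (mul_nonneg (hπ₀0 x y₁).le (hπ₀0 x y₂).le)
    -- core inequality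
    set s := r x y₁ - r x y₂ with hs
    have hp : pstar x y₁ y₂ = σ s := hpstar x y₁ y₂
    rw [hp, hstar, ← hs, hσneg (hbar θ x y₁ y₂), hσneg s]
    exact gibbs (hσ0 s) (hσ1 s) (hσ0 _) (hσ1 _)
  have : IsLocalMin L θstar := Filter.Eventually.of_forall hmin
  exact this.fderiv_eq_zero
end

section
/- Consider the DPO loss L_DPO(θ) of the softmax-parametrized policy π_θ (under the Bradley–Terry model p*(x,y₁,y₂) = σ(r(x,y₁) − r(x,y₂)), with fixed positive policies π₀ and π_ref), viewed as a function of θ : X × Y → ℝ, and let L* = inf_θ L_DPO(θ). Let (α_t)_{t≥1} be positive step sizes, G ≥ 0, and suppose the iterates satisfy θ_{t+1} = θ_t − α_t·∇L_DPO(θ_t) with ‖∇L_DPO(θ_t)‖ ≤ G for all t. Then for every T ≥ 2: min_{1 ≤ i ≤ T−1} ‖∇L_DPO(θ_i)‖² ≤ (2·G²·Σ_{t=1}^{T−1} α_t²)/(τ²·Σ_{t=1}^{T−1} α_t) + (L_DPO(θ_1) − L*)/(Σ_{t=1}^{T−1} α_t). -/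
open Real

noncomputable def dpoSP (t : ℝ) : ℝ := Real.log (1 + Real.exp t)
noncomputable def dpoSG (t : ℝ) : ℝ := Real.exp t / (1 + Real.exp t)

lemma dpoSP_pos_den (t : ℝ) : (0:ℝ) < 1 + Real.exp t := by positivity

lemma dpoSP_nonneg (t : ℝ) : 0 ≤ dpoSP t := by
  unfold dpoSP
  have := Real.exp_pos t
  exact Real.log_nonneg (by linarith)

lemma hasDerivAt_dpoSP (t : ℝ) : HasDerivAt dpoSP (dpoSG t) t := by
  have h1 : HasDerivAt (fun t : ℝ => 1 + Real.exp t) (Real.exp t) t :=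
    (Real.hasDerivAt_exp t).const_add 1
  have := h1.log (ne_of_gt (dpoSP_pos_den t))
  exact this

lemma hasDerivAt_dpoSG (t : ℝ) :
    HasDerivAt dpoSG (Real.exp t / (1 + Real.exp t) ^ 2) t := by
  have h1 : HasDerivAt (fun t : ℝ => 1 + Real.exp t) (Real.exp t) t :=
    (Real.hasDerivAt_exp t).const_add 1
  have := (Real.hasDerivAt_exp t).div h1 (ne_of_gt (dpoSP_pos_den t))
  have heq : (Real.exp t * (1 + Real.exp t) - Real.exp t * Real.exp t) / (1 + Real.exp t) ^ 2
      = Real.exp t / (1 + Real.exp t) ^ 2 := by ring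
  have h2 : HasDerivAt dpoSG ((Real.exp t * (1 + Real.exp t) - Real.exp t * Real.exp t) / (1 + Real.exp t) ^ 2) t := this
  rw [heq] at h2; exact h2

lemma dpoSG_deriv_le (t : ℝ) : ‖Real.exp t / (1 + Real.exp t) ^ 2‖ ≤ 1/4 := by
  have he := Real.exp_pos t
  rw [Real.norm_eq_abs, abs_of_nonneg (by positivity)]
  rw [div_le_iff₀ (by positivity)]
  nlinarith [sq_nonneg (1 - Real.exp t)]

lemma dpoSG_lip (a b : ℝ) : |dpoSG a - dpoSG b| ≤ (1/4) * |a - b| := by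
  have hd : Differentiable ℝ dpoSG := fun t => (hasDerivAt_dpoSG t).differentiableAt
  have hlip : LipschitzWith (1/4 : NNReal) dpoSG := by
    apply lipschitzWith_of_nnnorm_deriv_le hd
    intro x
    have hx : deriv dpoSG x = Real.exp x / (1 + Real.exp x) ^ 2 := (hasDerivAt_dpoSG x).deriv
    rw [← NNReal.coe_le_coe, coe_nnnorm, hx]
    simpa using dpoSG_deriv_le x
  have := hlip.dist_le_mul a b
  simpa [Real.dist_eq] using this

lemma dpoSP_taylor (u v : ℝ) : dpoSP v ≤ dpoSP u + dpoSG u * (v - u) + (1/4) * (v - u)^2 := by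
  rcases lt_trichotomy u v with h | h | h
  · obtain ⟨c, ⟨hc1, hc2⟩, hcd⟩ := exists_hasDerivAt_eq_slope dpoSP dpoSG h
      (fun t _ => (hasDerivAt_dpoSP t).continuousAt.continuousWithinAt)
      (fun t _ => hasDerivAt_dpoSP t)
    have hvu : v - u ≠ 0 := by intro hh; linarith [sub_eq_zero.mp hh]
    have hslope : dpoSP v - dpoSP u = dpoSG c * (v - u) := by
      rw [hcd, div_mul_cancel₀ _ hvu]
    have h2 : (dpoSG c - dpoSG u) * (v - u) ≤ (1/4) * (v-u)^2 := by
      calc (dpoSG c - dpoSG u) * (v - u) ≤ |dpoSG c - dpoSG u| * |v - u| := by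
            rw [← abs_mul]; exact le_abs_self _
        _ ≤ ((1/4) * |c - u|) * |v - u| :=
            mul_le_mul_of_nonneg_right (dpoSG_lip c u) (abs_nonneg _)
        _ ≤ ((1/4) * |v - u|) * |v - u| := by
            have h1 : |c - u| ≤ |v - u| := by
              rw [abs_of_pos (by linarith : (0:ℝ) < c - u),
                abs_of_pos (by linarith : (0:ℝ) < v - u)]
              linarith
            nlinarith [abs_nonneg (v - u)]
        _ = (1/4) * (v - u)^2 := by rw [mul_assoc, ← pow_two, sq_abs]
    nlinarith [hslope, h2]
  · subst h; simp
  · obtain ⟨c, ⟨hc1, hc2⟩, hcd⟩ := exists_hasDerivAt_eq_slope dpoSP dpoSG h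
      (fun t _ => (hasDerivAt_dpoSP t).continuousAt.continuousWithinAt)
      (fun t _ => hasDerivAt_dpoSP t)
    have hvu : u - v ≠ 0 := by intro hh; linarith [sub_eq_zero.mp hh]
    have hslope : dpoSP u - dpoSP v = dpoSG c * (u - v) := by
      rw [hcd, div_mul_cancel₀ _ hvu]
    have h2 : (dpoSG u - dpoSG c) * (u - v) ≤ (1/4) * (v-u)^2 := by
      calc (dpoSG u - dpoSG c) * (u - v) ≤ |dpoSG u - dpoSG c| * |u - v| := by
            rw [← abs_mul]; exact le_abs_self _
        _ ≤ ((1/4) * |c - u|) * |u - v| := by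
            have := dpoSG_lip u c
            rw [abs_sub_comm c u]
            exact mul_le_mul_of_nonneg_right this (abs_nonneg _)
        _ ≤ ((1/4) * |u - v|) * |u - v| := by
            have h1 : |c - u| ≤ |u - v| := by
              rw [abs_of_neg (by linarith : c - u < 0),
                abs_of_pos (by linarith : (0:ℝ) < u - v)]
              linarith
            nlinarith [abs_nonneg (u - v)]
        _ = (1/4) * (v - u)^2 := by
            rw [mul_assoc, ← pow_two, sq_abs]; ring
    nlinarith [hslope, h2]

noncomputable def dpoPhi (p t : ℝ) : ℝ := p * dpoSP (-t) + (1-p) * dpoSP t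
noncomputable def dpoPsi (p t : ℝ) : ℝ := -(p * dpoSG (-t)) + (1-p) * dpoSG t

lemma dpoPhi_nonneg {p : ℝ} (hp0 : 0 ≤ p) (hp1 : p ≤ 1) (t : ℝ) : 0 ≤ dpoPhi p t := by
  have h1 := dpoSP_nonneg (-t)
  have h2 := dpoSP_nonneg t
  unfold dpoPhi
  nlinarith

lemma hasDerivAt_dpoPhi (p t : ℝ) : HasDerivAt (dpoPhi p) (dpoPsi p t) t := by
  have h1 : HasDerivAt (fun t : ℝ => dpoSP (-t)) (-dpoSG (-t)) t := by
    have h := (hasDerivAt_dpoSP (-t)).comp t (hasDerivAt_neg t)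
    rw [mul_neg_one] at h; exact h
  have := (h1.const_mul p).add ((hasDerivAt_dpoSP t).const_mul (1-p))
  have heq : dpoPhi p = fun t => p * dpoSP (-t) + (1-p) * dpoSP t := rfl
  have heq2 : dpoPsi p t = p * -dpoSG (-t) + (1-p) * dpoSG t := by unfold dpoPsi; ring
  rw [heq, heq2]
  exact this

lemma dpoPhi_taylor {p : ℝ} (hp0 : 0 ≤ p) (hp1 : p ≤ 1) (u v : ℝ) :
    dpoPhi p v ≤ dpoPhi p u + dpoPsi p u * (v - u) + (1/4) * (v - u)^2 := by
  have h1 := dpoSP_taylor (-u) (-v)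
  have h2 := dpoSP_taylor u v
  unfold dpoPhi dpoPsi
  nlinarith [mul_le_mul_of_nonneg_left h1 hp0,
    mul_le_mul_of_nonneg_left h2 (by linarith : (0:ℝ) ≤ 1 - p)]

set_option maxHeartbeats 2000000 in
/-- Gradient descent on the DPO loss of the softmax-parametrized policy,
with positive step sizes α_t and gradient norms bounded by G, satisfies for T ≥ 2:
min_{1 ≤ i ≤ T−1} ‖∇L_DPO(θ_i)‖² ≤ 2G²·Σα_t²/(τ²·Σα_t) + (L_DPO(θ_1) − L*)/Σα_t. -/
theorem dpo_gradient_descent_convergence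
    {X Y : Type*} [Fintype X] [Fintype Y] [Nonempty X] [Nonempty Y]
    (r : X → Y → ℝ) (τ : ℝ) (hτ : 0 < τ)
    (D : X → ℝ) (hD0 : ∀ x, 0 ≤ D x) (hD1 : ∑ x : X, D x = 1)
    (πref π₀ : X → Y → ℝ)
    (hπref0 : ∀ x y, 0 < πref x y) (hπref1 : ∀ x, ∑ y : Y, πref x y = 1)
    (hπ₀0 : ∀ x y, 0 < π₀ x y) (hπ₀1 : ∀ x, ∑ y : Y, π₀ x y = 1)
    (σ : ℝ → ℝ) (hσ : ∀ t, σ t = (1 + Real.exp (-t))⁻¹)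
    (pstar : X → Y → Y → ℝ)
    (hpstar : ∀ x y₁ y₂, pstar x y₁ y₂ = σ (r x y₁ - r x y₂))
    (πθ : EuclideanSpace ℝ (X × Y) → X → Y → ℝ)
    (hπθ : ∀ θ x y, πθ θ x y = Real.exp (θ (x, y)) / ∑ y' : Y, Real.exp (θ (x, y')))
    (hbar : EuclideanSpace ℝ (X × Y) → X → Y → Y → ℝ)
    (hhbar : ∀ θ x y₁ y₂, hbar θ x y₁ y₂ =
      (1 / τ) * (Real.log (πθ θ x y₁ / πref x y₁) - Real.log (πθ θ x y₂ / πref x y₂)))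
    (L : EuclideanSpace ℝ (X × Y) → ℝ)
    (hL : ∀ θ, L θ = -∑ x : X, D x * ∑ y₁ : Y, ∑ y₂ : Y,
      π₀ x y₁ * π₀ x y₂ *
        (pstar x y₁ y₂ * Real.log (σ (hbar θ x y₁ y₂)) +
         (1 - pstar x y₁ y₂) * Real.log (σ (-(hbar θ x y₁ y₂)))))
    (Lstar : ℝ) (hLstar : Lstar = sInf (Set.range L))
    (α : ℕ → ℝ) (hα : ∀ t, 1 ≤ t → 0 < α t)
    (G : ℝ) (hG : 0 ≤ G)
    (Θ : ℕ → EuclideanSpace ℝ (X × Y))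
    (hupdate : ∀ t, 1 ≤ t → Θ (t + 1) = Θ t - α t • gradient L (Θ t))
    (hgradbdd : ∀ t, 1 ≤ t → ‖gradient L (Θ t)‖ ≤ G)
    (T : ℕ) (hT : 2 ≤ T) :
    (Finset.Icc 1 (T - 1)).inf' (Finset.nonempty_Icc.mpr (by omega))
        (fun i => ‖gradient L (Θ i)‖ ^ 2) ≤
      2 * G ^ 2 * (∑ t ∈ Finset.Icc 1 (T - 1), α t ^ 2) /
          (τ ^ 2 * ∑ t ∈ Finset.Icc 1 (T - 1), α t) +
        (L (Θ 1) - Lstar) / ∑ t ∈ Finset.Icc 1 (T - 1), α t := by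
  classical
  set w : X × Y × Y → ℝ := fun i => D i.1 * (π₀ i.1 i.2.1 * π₀ i.1 i.2.2) with hw
  set p : X × Y × Y → ℝ := fun i => pstar i.1 i.2.1 i.2.2 with hp
  set A : X × Y × Y → (EuclideanSpace ℝ (X × Y) →L[ℝ] ℝ) := fun i =>
    (1/τ) • ((EuclideanSpace.proj (i.1, i.2.1) : EuclideanSpace ℝ (X × Y) →L[ℝ] ℝ)
      - EuclideanSpace.proj (i.1, i.2.2)) with hAdef
  set b : X × Y × Y → ℝ :=
    fun i => (1/τ) * (Real.log (πref i.1 i.2.2) - Real.log (πref i.1 i.2.1)) with hb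
  have hτ2 : (0:ℝ) < τ^2 := by positivity
  have hA : ∀ (i : X × Y × Y) (θ : EuclideanSpace ℝ (X × Y)),
      A i θ = (1/τ) * (θ (i.1, i.2.1) - θ (i.1, i.2.2)) := by
    intro i θ
    rw [hAdef]
    dsimp only
    rw [ContinuousLinearMap.smul_apply, ContinuousLinearMap.sub_apply]
    rw [EuclideanSpace.proj, EuclideanSpace.proj, PiLp.proj_apply, PiLp.proj_apply]
    simp [smul_eq_mul]
  have hσ01 : ∀ t, 0 < σ t ∧ σ t < 1 := by
    intro t
    rw [hσ]
    refine ⟨by positivity, ?_⟩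
    rw [inv_lt_one_iff₀]
    right
    linarith [Real.exp_pos (-t)]
  have hp0 : ∀ i, 0 ≤ p i := fun i => by
    rw [hp]; dsimp only; rw [hpstar]; exact le_of_lt (hσ01 _).1
  have hp1 : ∀ i, p i ≤ 1 := fun i => by
    rw [hp]; dsimp only; rw [hpstar]; exact le_of_lt (hσ01 _).2
  have hw0 : ∀ i, 0 ≤ w i := fun i => by
    rw [hw]; dsimp only
    exact mul_nonneg (hD0 _) (le_of_lt (mul_pos (hπ₀0 _ _) (hπ₀0 _ _)))
  have hbar_eq : ∀ (θ : EuclideanSpace ℝ (X × Y)) (x : X) (y₁ y₂ : Y),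
      hbar θ x y₁ y₂ = A (x, y₁, y₂) θ + b (x, y₁, y₂) := by
    intro θ x y₁ y₂
    have hS : (0:ℝ) < ∑ y' : Y, Real.exp (θ (x, y')) :=
      Finset.sum_pos (fun _ _ => Real.exp_pos _) Finset.univ_nonempty
    have hπθpos : ∀ y : Y, 0 < πθ θ x y := by
      intro y; rw [hπθ]; positivity
    have hlog : ∀ y : Y, Real.log (πθ θ x y / πref x y) =
        θ (x, y) - Real.log (∑ y' : Y, Real.exp (θ (x, y'))) - Real.log (πref x y) := by
      intro y
      rw [hπθ, Real.log_div (by positivity) (ne_of_gt (hπref0 x y)),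
        Real.log_div (Real.exp_ne_zero _) (ne_of_gt hS), Real.log_exp]
    rw [hhbar, hlog, hlog, hA, hb]
    dsimp only
    ring
  have hlogσ : ∀ t, Real.log (σ t) = -dpoSP (-t) := by
    intro t
    rw [hσ, Real.log_inv]
    rfl
  have hLrw : ∀ θ : EuclideanSpace ℝ (X × Y),
      L θ = ∑ i : X × Y × Y, w i * dpoPhi (p i) (A i θ + b i) := by
    intro θ
    rw [hL]
    simp only [Fintype.sum_prod_type]
    rw [← Finset.sum_neg_distrib]
    refine Finset.sum_congr rfl fun x _ => ?_
    rw [Finset.mul_sum, ← Finset.sum_neg_distrib]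
    refine Finset.sum_congr rfl fun y₁ _ => ?_
    rw [Finset.mul_sum, ← Finset.sum_neg_distrib]
    refine Finset.sum_congr rfl fun y₂ _ => ?_
    rw [hbar_eq, hlogσ, hlogσ, neg_neg]
    rw [hw, hp]
    dsimp only
    rw [hpstar, dpoPhi]
    ring
  have hLnn : ∀ θ : EuclideanSpace ℝ (X × Y), 0 ≤ L θ := by
    intro θ
    rw [hLrw]
    exact Finset.sum_nonneg fun i _ =>
      mul_nonneg (hw0 i) (dpoPhi_nonneg (hp0 i) (hp1 i) _)
  have hLstar_le : ∀ θ : EuclideanSpace ℝ (X × Y), Lstar ≤ L θ := by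
    intro θ
    rw [hLstar]
    exact csInf_le ⟨0, fun y hy => by obtain ⟨θ', rfl⟩ := hy; exact hLnn θ'⟩
      (Set.mem_range_self θ)
  have hwsum : (∑ i : X × Y × Y, w i) = 1 := by
    simp only [hw, Fintype.sum_prod_type]
    have hx : ∀ x : X, (∑ y₁ : Y, ∑ y₂ : Y, D x * (π₀ x y₁ * π₀ x y₂)) = D x := by
      intro x
      calc ∑ y₁ : Y, ∑ y₂ : Y, D x * (π₀ x y₁ * π₀ x y₂)
          = D x * ∑ y₁ : Y, ∑ y₂ : Y, π₀ x y₁ * π₀ x y₂ := by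
            rw [Finset.mul_sum]
            exact Finset.sum_congr rfl fun y₁ _ => by rw [Finset.mul_sum]
        _ = D x * ((∑ y₁ : Y, π₀ x y₁) * (∑ y₂ : Y, π₀ x y₂)) := by
            rw [← Finset.sum_mul_sum]
        _ = D x := by rw [hπ₀1]; ring
    rw [Finset.sum_congr rfl fun x _ => hx x, hD1]
  have hDeriv : ∀ θ : EuclideanSpace ℝ (X × Y),
      HasFDerivAt L (∑ i : X × Y × Y, (w i * dpoPsi (p i) (A i θ + b i)) • A i) θ := by
    intro θ
    have h1 : ∀ i ∈ (Finset.univ : Finset (X × Y × Y)),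
        HasFDerivAt (fun θ : EuclideanSpace ℝ (X × Y) => w i * dpoPhi (p i) (A i θ + b i))
          ((w i * dpoPsi (p i) (A i θ + b i)) • A i) θ := by
      intro i _
      have haff : HasFDerivAt (fun θ : EuclideanSpace ℝ (X × Y) => A i θ + b i) (A i) θ :=
        (A i).hasFDerivAt.add_const (b i)
      have h2 := (hasDerivAt_dpoPhi (p i) (A i θ + b i)).comp_hasFDerivAt θ haff
      have h3 := h2.const_mul (w i)
      simpa [Function.comp, smul_smul] using h3
    have h4 := HasFDerivAt.fun_sum h1
    have h5 : (fun θ : EuclideanSpace ℝ (X × Y) =>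
        ∑ i : X × Y × Y, w i * dpoPhi (p i) (A i θ + b i)) = L :=
      funext fun θ => (hLrw θ).symm
    rwa [h5] at h4
  have hgradL : ∀ (θ v : EuclideanSpace ℝ (X × Y)), inner ℝ (gradient L θ) v
      = ∑ i : X × Y × Y, (w i * dpoPsi (p i) (A i θ + b i)) * A i v := by
    intro θ v
    rw [gradient, InnerProductSpace.toDual_symm_apply, (hDeriv θ).fderiv]
    rw [ContinuousLinearMap.sum_apply]
    exact Finset.sum_congr rfl fun i _ => by rw [ContinuousLinearMap.smul_apply, smul_eq_mul]
  have hcoordsq : ∀ (δ : EuclideanSpace ℝ (X × Y)) (j : X × Y), (δ j)^2 ≤ ‖δ‖^2 := by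
    intro δ j
    have hn : ‖δ‖^2 = ∑ k : X × Y, (δ k)^2 := by
      rw [← real_inner_self_eq_norm_sq]
      rw [PiLp.inner_apply]
      exact Finset.sum_congr rfl fun k _ => by
        simp [RCLike.inner_apply, pow_two]
    rw [hn]
    exact Finset.single_le_sum (fun k _ => sq_nonneg (δ k)) (Finset.mem_univ j)
  have hAbound : ∀ (i : X × Y × Y) (δ : EuclideanSpace ℝ (X × Y)),
      (A i δ)^2 ≤ (4/τ^2) * ‖δ‖^2 := by
    intro i δ
    rw [hA]
    have h1 := hcoordsq δ (i.1, i.2.1)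
    have h2 := hcoordsq δ (i.1, i.2.2)
    have key : (δ (i.1, i.2.1) - δ (i.1, i.2.2))^2 ≤ 4 * ‖δ‖^2 := by nlinarith
    have heq : ((1/τ) * (δ (i.1, i.2.1) - δ (i.1, i.2.2)))^2
        = (δ (i.1, i.2.1) - δ (i.1, i.2.2))^2 * (1/τ^2) := by
      field_simp
    rw [heq]
    calc (δ (i.1, i.2.1) - δ (i.1, i.2.2))^2 * (1/τ^2)
        ≤ (4 * ‖δ‖^2) * (1/τ^2) :=
          mul_le_mul_of_nonneg_right key (by positivity)
      _ = (4/τ^2) * ‖δ‖^2 := by ring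
  have hdescent : ∀ (θ δ : EuclideanSpace ℝ (X × Y)),
      L (θ + δ) ≤ L θ + inner ℝ (gradient L θ) δ + (1/τ^2) * ‖δ‖^2 := by
    intro θ δ
    rw [hLrw (θ + δ), hLrw θ, hgradL]
    have key : ∀ i ∈ (Finset.univ : Finset (X × Y × Y)),
        w i * dpoPhi (p i) (A i (θ + δ) + b i)
          ≤ w i * dpoPhi (p i) (A i θ + b i)
            + (w i * dpoPsi (p i) (A i θ + b i)) * A i δ
            + w i * ((1/τ^2) * ‖δ‖^2) := by
      intro i _
      have hv : A i (θ + δ) + b i = (A i θ + b i) + A i δ := by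
        rw [map_add]; ring
      have ht := dpoPhi_taylor (hp0 i) (hp1 i) (A i θ + b i) (A i (θ + δ) + b i)
      rw [hv, add_sub_cancel_left] at ht
      have hq : (1/4) * (A i δ)^2 ≤ (1/τ^2) * ‖δ‖^2 := by
        calc (1/4) * (A i δ)^2 ≤ (1/4) * ((4/τ^2) * ‖δ‖^2) :=
              mul_le_mul_of_nonneg_left (hAbound i δ) (by norm_num)
          _ = (1/τ^2) * ‖δ‖^2 := by ring
      have ht2 : dpoPhi (p i) (A i (θ + δ) + b i)
          ≤ dpoPhi (p i) (A i θ + b i) + dpoPsi (p i) (A i θ + b i) * A i δ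
            + (1/τ^2) * ‖δ‖^2 := by
        rw [hv]
        linarith
      have hmul := mul_le_mul_of_nonneg_left ht2 (hw0 i)
      calc w i * dpoPhi (p i) (A i (θ + δ) + b i)
          ≤ w i * (dpoPhi (p i) (A i θ + b i) + dpoPsi (p i) (A i θ + b i) * A i δ
              + (1/τ^2) * ‖δ‖^2) := hmul
        _ = w i * dpoPhi (p i) (A i θ + b i)
            + (w i * dpoPsi (p i) (A i θ + b i)) * A i δ
            + w i * ((1/τ^2) * ‖δ‖^2) := by ring
    have hsum := Finset.sum_le_sum key
    rw [Finset.sum_add_distrib, Finset.sum_add_distrib, ← Finset.sum_mul, hwsum, one_mul]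
      at hsum
    exact hsum
  have hstep : ∀ t, 1 ≤ t →
      L (Θ (t+1)) ≤ L (Θ t) - α t * ‖gradient L (Θ t)‖^2
        + (1/τ^2) * (α t)^2 * ‖gradient L (Θ t)‖^2 := by
    intro t ht
    have hd := hdescent (Θ t) (-(α t • gradient L (Θ t)))
    have he : Θ t + -(α t • gradient L (Θ t)) = Θ (t+1) := by
      rw [hupdate t ht, sub_eq_add_neg]
    rw [he] at hd
    have hinner : inner ℝ (gradient L (Θ t)) (-(α t • gradient L (Θ t)))
        = -(α t * ‖gradient L (Θ t)‖^2) := by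
      rw [inner_neg_right, real_inner_smul_right, real_inner_self_eq_norm_sq]
    have hnorm : ‖-(α t • gradient L (Θ t))‖^2 = (α t)^2 * ‖gradient L (Θ t)‖^2 := by
      rw [norm_neg, norm_smul, mul_pow, Real.norm_eq_abs, sq_abs]
    rw [hinner, hnorm] at hd
    calc L (Θ (t+1)) ≤ L (Θ t) + -(α t * ‖gradient L (Θ t)‖^2)
          + (1/τ^2) * ((α t)^2 * ‖gradient L (Θ t)‖^2) := hd
      _ = L (Θ t) - α t * ‖gradient L (Θ t)‖^2
          + (1/τ^2) * (α t)^2 * ‖gradient L (Θ t)‖^2 := by ring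
  set m := (Finset.Icc 1 (T - 1)).inf' (Finset.nonempty_Icc.mpr (by omega))
      (fun i => ‖gradient L (Θ i)‖ ^ 2) with hm
  have hm_le : ∀ t ∈ Finset.Icc 1 (T-1), m ≤ ‖gradient L (Θ t)‖^2 :=
    fun t ht => Finset.inf'_le _ ht
  have hstep2 : ∀ t ∈ Finset.Icc 1 (T-1),
      L (Θ (t+1)) ≤ L (Θ t) - α t * m + 2*G^2/τ^2 * (α t)^2 := by
    intro t ht
    have ht1 : 1 ≤ t := (Finset.mem_Icc.mp ht).1
    have h1 := hstep t ht1
    have hg := hgradbdd t ht1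
    have hgn : (0:ℝ) ≤ ‖gradient L (Θ t)‖ := norm_nonneg _
    have hg2 : ‖gradient L (Θ t)‖^2 ≤ G^2 := by nlinarith
    have hα' := hα t ht1
    have hmle := hm_le t ht
    have e1 : α t * m ≤ α t * ‖gradient L (Θ t)‖^2 :=
      mul_le_mul_of_nonneg_left hmle (le_of_lt hα')
    have e2 : (1/τ^2) * (α t)^2 * ‖gradient L (Θ t)‖^2 ≤ 2*G^2/τ^2 * (α t)^2 := by
      have h3 : (1/τ^2) * (α t)^2 * ‖gradient L (Θ t)‖^2 ≤ (1/τ^2) * (α t)^2 * G^2 :=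
        mul_le_mul_of_nonneg_left hg2 (by positivity)
      have h4 : 2*G^2/τ^2 * (α t)^2 - (1/τ^2) * (α t)^2 * G^2 = G^2 * (α t)^2 / τ^2 := by
        ring
      have h5 : (0:ℝ) ≤ G^2 * (α t)^2 / τ^2 := by positivity
      linarith
    linarith
  have hIcc : ∀ f : ℕ → ℝ, ∑ t ∈ Finset.Icc 1 (T-1), f t
      = ∑ i ∈ Finset.range (T-1), f (i+1) := by
    intro f
    rw [← Finset.Ico_add_one_right_eq_Icc, Finset.sum_Ico_eq_sum_range]
    simp [Nat.add_comm]
  have hsum : L (Θ T) ≤ L (Θ 1) - m * (∑ i ∈ Finset.range (T-1), α (i+1))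
      + 2*G^2/τ^2 * (∑ i ∈ Finset.range (T-1), (α (i+1))^2) := by
    have h1 : ∑ i ∈ Finset.range (T-1), (L (Θ (i+1+1)) - L (Θ (i+1)))
        ≤ ∑ i ∈ Finset.range (T-1),
          (-(α (i+1) * m) + 2*G^2/τ^2 * (α (i+1))^2) := by
      refine Finset.sum_le_sum fun i hi => ?_
      have hmem : i+1 ∈ Finset.Icc 1 (T-1) := by
        rw [Finset.mem_Icc]
        have := Finset.mem_range.mp hi
        omega
      have := hstep2 (i+1) hmem
      linarith
    rw [Finset.sum_range_sub (fun i => L (Θ (i+1)))] at h1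
    have hT1 : T - 1 + 1 = T := by omega
    rw [hT1] at h1
    have hsplit : ∑ i ∈ Finset.range (T-1), (-(α (i+1) * m) + 2*G^2/τ^2 * (α (i+1))^2)
        = -(m * ∑ i ∈ Finset.range (T-1), α (i+1))
          + 2*G^2/τ^2 * (∑ i ∈ Finset.range (T-1), (α (i+1))^2) := by
      rw [Finset.sum_add_distrib]
      congr 1
      · rw [Finset.sum_neg_distrib, Finset.mul_sum]
        congr 1
        exact Finset.sum_congr rfl fun i _ => mul_comm _ _
      · rw [Finset.mul_sum]
    rw [hsplit] at h1
    linarith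
  rw [hIcc α, hIcc (fun t => α t ^ 2)]
  have hS : 0 < ∑ i ∈ Finset.range (T-1), α (i+1) :=
    Finset.sum_pos (fun i _ => hα (i+1) (by omega))
      (by rw [Finset.nonempty_range_iff]; omega)
  have hfin : m * (∑ i ∈ Finset.range (T-1), α (i+1))
      ≤ 2*G^2*(∑ i ∈ Finset.range (T-1), (α (i+1))^2)/τ^2 + (L (Θ 1) - Lstar) := by
    have h6 := hLstar_le (Θ T)
    have h7 : 2*G^2/τ^2 * (∑ i ∈ Finset.range (T-1), (α (i+1))^2)
        = 2*G^2*(∑ i ∈ Finset.range (T-1), (α (i+1))^2)/τ^2 := by ring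
    linarith [hsum]
  have hrw : 2 * G ^ 2 * (∑ i ∈ Finset.range (T-1), α (i+1) ^ 2) /
        (τ ^ 2 * ∑ i ∈ Finset.range (T-1), α (i+1)) +
      (L (Θ 1) - Lstar) / ∑ i ∈ Finset.range (T-1), α (i+1)
      = (2*G^2*(∑ i ∈ Finset.range (T-1), (α (i+1))^2)/τ^2 + (L (Θ 1) - Lstar))
        / ∑ i ∈ Finset.range (T-1), α (i+1) := by
    field_simp
  rw [hrw, le_div_iff₀ hS]
  exact hfin
end

section
/- Fix ε₀ > 0, c₀ = σ(ε₀/τ)·σ(−ε₀/τ) − 1 ∈ (−1,0), γ ∈ (0,1) and μ ∈ (0,1). For θ : X × Y → ℝ and x ∈ X, let Ω(θ,x) be the set of pairs (y₁,y₂) ∈ Y × Y such that both |log(p*(x,y₁,y₂)/(1 − p*(x,y₁,y₂)))| ≥ ε₀ and |log(π_θ(y₁|x)·π_ref(y₂|x)/(π_θ(y₂|x)·π_ref(y₁|x)))| ≥ ε₀ hold, where p*(x,y₁,y₂) = σ(r(x,y₁) − r(x,y₂)), and suppose |Ω(θ,x)|/K² = γ for all x ∈ X. Define the sampling distribution π₁(y₁,y₂|x)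 = μ/K² if (y₁,y₂) ∈ Ω(θ,x) and π₁(y₁,y₂|x) = (1 − μγ)/((1 − γ)·K²) otherwise, and the DPO loss with this sampling: L(θ) = −Σ_{x∈X} 𝒟(x) Σ_{y₁,y₂∈Y} π₁(y₁,y₂|x)·[p*(x,y₁,y₂)·log σ(h̄_θ(x,y₁,y₂)) + (1 − p*(x,y₁,y₂))·log σ(−h̄_θ(x,y₁,y₂))]. Then at such θ the second derivative satisfies |D²L(θ)(z,z)| ≤ (4·(μ·γ·c₀ + 1)/τ²)·Σ_{x,y} z(x,y)² for every z : X × Y → ℝ. -/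
namespace DPO14Aux

noncomputable def psi (t : ℝ) : ℝ := Real.log (1 + Real.exp t)
noncomputable def sg (t : ℝ) : ℝ := Real.exp t / (1 + Real.exp t)
noncomputable def qf (t : ℝ) : ℝ := Real.exp t / (1 + Real.exp t) ^ 2

lemma one_add_exp_pos (t : ℝ) : 0 < 1 + Real.exp t := by positivity

lemma hasDerivAt_psi (t : ℝ) : HasDerivAt psi (sg t) t := by
  have h := ((Real.hasDerivAt_exp t).const_add 1).log (one_add_exp_pos t).ne'
  rw [show psi = fun t => Real.log (1 + Real.exp t) from rfl]
  simpa [sg] using h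

lemma hasDerivAt_sg (t : ℝ) : HasDerivAt sg (qf t) t := by
  have h := (Real.hasDerivAt_exp t).div ((Real.hasDerivAt_exp t).const_add 1)
    (one_add_exp_pos t).ne'
  refine h.congr_deriv ?_
  rw [qf]
  ring

lemma qf_eq (t : ℝ) : qf t = (2 + 2 * Real.cosh t)⁻¹ := by
  have h2 := Real.exp_pos t
  have h1 : (1 + Real.exp t) ^ 2 = Real.exp t * (2 + 2 * Real.cosh t) := by
    rw [Real.cosh_eq, Real.exp_neg]; field_simp; ring
  rw [qf, h1, div_mul_cancel_left₀ h2.ne']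

lemma qf_nonneg (t : ℝ) : 0 ≤ qf t := by rw [qf]; positivity

lemma qf_neg (t : ℝ) : qf (-t) = qf t := by rw [qf_eq, qf_eq, Real.cosh_neg]

lemma qf_le_quarter (t : ℝ) : qf t ≤ 1 / 4 := by
  rw [qf_eq, show (1:ℝ)/4 = 4⁻¹ by norm_num]
  exact inv_anti₀ (by norm_num) (by nlinarith [Real.one_le_cosh t])

lemma qf_anti {a t : ℝ} (ha : 0 ≤ a) (h : a ≤ |t|) : qf t ≤ qf a := by
  rw [qf_eq, qf_eq]
  have hc : Real.cosh a ≤ Real.cosh t := by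
    rw [Real.cosh_le_cosh]; rwa [abs_of_nonneg ha]
  exact inv_anti₀ (by nlinarith [Real.one_le_cosh a]) (by linarith)

lemma qf_sigma (t : ℝ) : qf t = (1 + Real.exp (-t))⁻¹ * (1 + Real.exp t)⁻¹ := by
  have h1 := one_add_exp_pos t
  have h2 := Real.exp_pos t
  have h1 : (1 + Real.exp (-t)) * (1 + Real.exp t) = (1 + Real.exp t) ^ 2 / Real.exp t := by
    rw [Real.exp_neg]; field_simp; ring
  rw [qf, ← mul_inv, h1, inv_div]


variable {E : Type*} [NormedAddCommGroup E] [NormedSpace ℝ E]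

lemma hasFDerivAt_term (ℓ : E →L[ℝ] ℝ) (d a b : ℝ) (v : E) :
    HasFDerivAt (fun w => a * psi (-(ℓ w + d)) + b * psi (ℓ w + d))
      ((-(a * sg (-(ℓ v + d))) + b * sg (ℓ v + d)) • ℓ) v := by
  have hu : HasFDerivAt (fun w : E => ℓ w + d) ℓ v := ℓ.hasFDerivAt.add_const d
  have hnu : HasFDerivAt (fun w : E => -(ℓ w + d)) (-ℓ) v := hu.neg
  have h1 : HasFDerivAt (fun w : E => psi (-(ℓ w + d))) (sg (-(ℓ v + d)) • (-ℓ)) v :=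
    (hasDerivAt_psi _).comp_hasFDerivAt v hnu
  have h2 : HasFDerivAt (fun w : E => psi (ℓ w + d)) (sg (ℓ v + d) • ℓ) v :=
    (hasDerivAt_psi _).comp_hasFDerivAt v hu
  have h := (h1.const_mul a).add (h2.const_mul b)
  refine h.congr_fderiv ?_
  ext w
  simp [smul_smul]
  ring

lemma hasFDerivAt_term2 (ℓ : E →L[ℝ] ℝ) (d a b : ℝ) (v : E) :
    HasFDerivAt (fun w => (-(a * sg (-(ℓ w + d))) + b * sg (ℓ w + d)) • ℓ)
      (ContinuousLinearMap.smulRight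
        ((a * qf (-(ℓ v + d)) + b * qf (ℓ v + d)) • ℓ) ℓ) v := by
  have hu : HasFDerivAt (fun w : E => ℓ w + d) ℓ v := ℓ.hasFDerivAt.add_const d
  have hnu : HasFDerivAt (fun w : E => -(ℓ w + d)) (-ℓ) v := hu.neg
  have h1 : HasFDerivAt (fun w : E => sg (-(ℓ w + d))) (qf (-(ℓ v + d)) • (-ℓ)) v :=
    (hasDerivAt_sg _).comp_hasFDerivAt v hnu
  have h2 : HasFDerivAt (fun w : E => sg (ℓ w + d)) (qf (ℓ v + d) • ℓ) v :=
    (hasDerivAt_sg _).comp_hasFDerivAt v hu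
  have hm : HasFDerivAt (fun w : E => -(a * sg (-(ℓ w + d))) + b * sg (ℓ w + d))
      ((a * qf (-(ℓ v + d)) + b * qf (ℓ v + d)) • ℓ) v := by
    have h := ((h1.const_mul a).neg).add (h2.const_mul b)
    refine h.congr_fderiv ?_
    ext w
    simp [smul_smul]
    ring
  exact hm.smul_const ℓ

lemma second_deriv_eval {ιa ιb : Type*} [Fintype ιa] [Fintype ιb]
    (A B : ιa → ιb → ιb → ℝ) (lm : ιa → ιb → ιb → (E →L[ℝ] ℝ)) (dd : ιa → ιb → ιb → ℝ)
    (θ z : E) :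
    fderiv ℝ (fderiv ℝ (fun w => ∑ x : ιa, ∑ y₁ : ιb, ∑ y₂ : ιb,
        (A x y₁ y₂ * psi (-(lm x y₁ y₂ w + dd x y₁ y₂)) +
         B x y₁ y₂ * psi (lm x y₁ y₂ w + dd x y₁ y₂)))) θ z z
    = ∑ x : ιa, ∑ y₁ : ιb, ∑ y₂ : ιb,
        (A x y₁ y₂ + B x y₁ y₂) * qf (lm x y₁ y₂ θ + dd x y₁ y₂) * (lm x y₁ y₂ z) ^ 2 := by
  have hF : fderiv ℝ (fun w => ∑ x : ιa, ∑ y₁ : ιb, ∑ y₂ : ιb,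
        (A x y₁ y₂ * psi (-(lm x y₁ y₂ w + dd x y₁ y₂)) +
         B x y₁ y₂ * psi (lm x y₁ y₂ w + dd x y₁ y₂)))
      = fun v => ∑ x : ιa, ∑ y₁ : ιb, ∑ y₂ : ιb,
        (-(A x y₁ y₂ * sg (-(lm x y₁ y₂ v + dd x y₁ y₂))) +
          B x y₁ y₂ * sg (lm x y₁ y₂ v + dd x y₁ y₂)) • lm x y₁ y₂ := by
    funext v
    refine HasFDerivAt.fderiv ?_
    exact HasFDerivAt.fun_sum fun x _ => HasFDerivAt.fun_sum fun y₁ _ =>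
      HasFDerivAt.fun_sum fun y₂ _ => hasFDerivAt_term _ _ _ _ _
  rw [hF]
  have hS : HasFDerivAt (fun v => ∑ x : ιa, ∑ y₁ : ιb, ∑ y₂ : ιb,
        (-(A x y₁ y₂ * sg (-(lm x y₁ y₂ v + dd x y₁ y₂))) +
          B x y₁ y₂ * sg (lm x y₁ y₂ v + dd x y₁ y₂)) • lm x y₁ y₂)
      (∑ x : ιa, ∑ y₁ : ιb, ∑ y₂ : ιb,
        ContinuousLinearMap.smulRight
          ((A x y₁ y₂ * qf (-(lm x y₁ y₂ θ + dd x y₁ y₂)) +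
            B x y₁ y₂ * qf (lm x y₁ y₂ θ + dd x y₁ y₂)) • lm x y₁ y₂) (lm x y₁ y₂)) θ :=
    HasFDerivAt.fun_sum fun x _ => HasFDerivAt.fun_sum fun y₁ _ =>
      HasFDerivAt.fun_sum fun y₂ _ => hasFDerivAt_term2 _ _ _ _ _
  rw [hS.fderiv]
  simp only [ContinuousLinearMap.coe_sum', Finset.sum_apply,
    ContinuousLinearMap.smulRight_apply, ContinuousLinearMap.coe_smul',
    Pi.smul_apply, smul_eq_mul]
  refine Finset.sum_congr rfl fun x _ => Finset.sum_congr rfl fun y₁ _ =>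
    Finset.sum_congr rfl fun y₂ _ => ?_
  rw [qf_neg]
  ring


noncomputable def lmap {X Y : Type*} (τ : ℝ) (x : X) (y₁ y₂ : Y) : (X × Y → ℝ) →L[ℝ] ℝ :=
  (1/τ) • ((ContinuousLinearMap.proj (x, y₁) : (X × Y → ℝ) →L[ℝ] ℝ) -
    (ContinuousLinearMap.proj (x, y₂) : (X × Y → ℝ) →L[ℝ] ℝ))

lemma lmap_apply {X Y : Type*} (τ : ℝ) (x : X) (y₁ y₂ : Y) (f : X × Y → ℝ) :
    lmap τ x y₁ y₂ f = 1/τ * (f (x, y₁) - f (x, y₂)) := by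
  simp [lmap]

end DPO14Aux

open DPO14Aux



set_option maxHeartbeats 2000000 in
/-- With the margin-biased sampling distribution π₁ (putting mass μ/K²
on pairs in Ω(θ,x) and (1−μγ)/((1−γ)K²) elsewhere, where |Ω(θ,x)|/K² = γ for all x),
the second derivative of the corresponding DPO loss satisfies
|D²L(θ)(z,z)| ≤ (4·(μ·γ·c₀ + 1)/τ²)·Σ_{x,y} z(x,y)², where
c₀ = σ(ε₀/τ)·σ(−ε₀/τ) − 1. -/
theorem dpo_biased_sampling_smoothness
    {X Y : Type*} [Fintype X] [Fintype Y] [Nonempty X] [Nonempty Y]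
    (r : X → Y → ℝ) (τ : ℝ) (hτ : 0 < τ)
    (D : X → ℝ) (hD0 : ∀ x, 0 ≤ D x) (hD1 : ∑ x : X, D x = 1)
    (πref : X → Y → ℝ)
    (hπref0 : ∀ x y, 0 < πref x y) (hπref1 : ∀ x, ∑ y : Y, πref x y = 1)
    (σ : ℝ → ℝ) (hσ : ∀ t, σ t = (1 + Real.exp (-t))⁻¹)
    (pstar : X → Y → Y → ℝ)
    (hpstar : ∀ x y₁ y₂, pstar x y₁ y₂ = σ (r x y₁ - r x y₂))
    (πθ : (X × Y → ℝ) → X → Y → ℝ)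
    (hπθ : ∀ θ x y, πθ θ x y = Real.exp (θ (x, y)) / ∑ y' : Y, Real.exp (θ (x, y')))
    (hbar : (X × Y → ℝ) → X → Y → Y → ℝ)
    (hhbar : ∀ θ x y₁ y₂, hbar θ x y₁ y₂ =
      (1 / τ) * (Real.log (πθ θ x y₁ / πref x y₁) - Real.log (πθ θ x y₂ / πref x y₂)))
    (ε₀ : ℝ) (hε₀ : 0 < ε₀)
    (c₀ : ℝ) (hc₀ : c₀ = σ (ε₀ / τ) * σ (-(ε₀ / τ)) - 1)
    (hc₀mem : -1 < c₀ ∧ c₀ < 0)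
    (γ μ : ℝ) (hγ : 0 < γ ∧ γ < 1) (hμ : 0 < μ ∧ μ < 1)
    (θ : X × Y → ℝ)
    (Ω : X → Finset (Y × Y))
    (hΩ : ∀ x (p : Y × Y), p ∈ Ω x ↔
      ε₀ ≤ |Real.log (pstar x p.1 p.2 / (1 - pstar x p.1 p.2))| ∧
      ε₀ ≤ |Real.log (πθ θ x p.1 * πref x p.2 / (πθ θ x p.2 * πref x p.1))|)
    (hγθ : ∀ x, ((Ω x).card : ℝ) / (Fintype.card Y : ℝ) ^ 2 = γ)
    (π₁ : X → Y → Y → ℝ)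
    (hπ₁mem : ∀ x y₁ y₂, (y₁, y₂) ∈ Ω x →
      π₁ x y₁ y₂ = μ / (Fintype.card Y : ℝ) ^ 2)
    (hπ₁nmem : ∀ x y₁ y₂, (y₁, y₂) ∉ Ω x →
      π₁ x y₁ y₂ = (1 - μ * γ) / ((1 - γ) * (Fintype.card Y : ℝ) ^ 2))
    (L : (X × Y → ℝ) → ℝ)
    (hL : ∀ θ', L θ' = -∑ x : X, D x * ∑ y₁ : Y, ∑ y₂ : Y,
      π₁ x y₁ y₂ *
        (pstar x y₁ y₂ * Real.log (σ (hbar θ' x y₁ y₂)) +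
         (1 - pstar x y₁ y₂) * Real.log (σ (-(hbar θ' x y₁ y₂))))) :
    ∀ z : X × Y → ℝ,
      |fderiv ℝ (fderiv ℝ L) θ z z| ≤
        (4 * (μ * γ * c₀ + 1) / τ ^ 2) * ∑ p : X × Y, z p ^ 2 := by
  intro z
  classical
  obtain ⟨hγ0, hγ1⟩ := hγ
  obtain ⟨hμ0, hμ1⟩ := hμ
  obtain ⟨hc₀l, hc₀u⟩ := hc₀mem
  have hτ' : τ ≠ 0 := hτ.ne'
  have hK0 : (0:ℝ) < (Fintype.card Y : ℝ) := by exact_mod_cast Fintype.card_pos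
  have hK2 : (0:ℝ) < (Fintype.card Y : ℝ) ^ 2 := by positivity
  have hμγ : μ * γ < 1 := by nlinarith
  have hZ : ∀ (w : X × Y → ℝ) (x : X), (0:ℝ) < ∑ y' : Y, Real.exp (w (x, y')) :=
    fun w x => Finset.sum_pos (fun y _ => Real.exp_pos _) Finset.univ_nonempty
  have hπθpos : ∀ x y, 0 < πθ θ x y := by
    intro x y; rw [hπθ]; exact div_pos (Real.exp_pos _) (hZ θ x)
  -- affine formula for hbar
  have hbar_eq : ∀ (w : X × Y → ℝ) (x : X) (y₁ y₂ : Y), hbar w x y₁ y₂ =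
      lmap τ x y₁ y₂ w + 1/τ * (Real.log (πref x y₂) - Real.log (πref x y₁)) := by
    intro w x y₁ y₂
    have e1 : ∀ y : Y, Real.log (πθ w x y / πref x y)
        = w (x, y) - Real.log (∑ y' : Y, Real.exp (w (x, y'))) - Real.log (πref x y) := by
      intro y
      rw [hπθ, Real.log_div (div_pos (Real.exp_pos _) (hZ w x)).ne' (hπref0 x y).ne',
        Real.log_div (Real.exp_pos _).ne' (hZ w x).ne', Real.log_exp]
    rw [hhbar, e1, e1, lmap_apply]
    ring
  -- rewrite L into the standard form
  have hLG : L = fun w => ∑ x : X, ∑ y₁ : Y, ∑ y₂ : Y,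
      (D x * π₁ x y₁ y₂ * pstar x y₁ y₂ *
          psi (-(lmap τ x y₁ y₂ w + 1/τ * (Real.log (πref x y₂) - Real.log (πref x y₁)))) +
        D x * π₁ x y₁ y₂ * (1 - pstar x y₁ y₂) *
          psi (lmap τ x y₁ y₂ w + 1/τ * (Real.log (πref x y₂) - Real.log (πref x y₁)))) := by
    funext w
    rw [hL]
    have key : ∀ x : X, D x * ∑ y₁ : Y, ∑ y₂ : Y,
        π₁ x y₁ y₂ *
          (pstar x y₁ y₂ * Real.log (σ (hbar w x y₁ y₂)) +
           (1 - pstar x y₁ y₂) * Real.log (σ (-(hbar w x y₁ y₂))))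
        = -(∑ y₁ : Y, ∑ y₂ : Y,
          (D x * π₁ x y₁ y₂ * pstar x y₁ y₂ *
              psi (-(lmap τ x y₁ y₂ w + 1/τ * (Real.log (πref x y₂) - Real.log (πref x y₁)))) +
            D x * π₁ x y₁ y₂ * (1 - pstar x y₁ y₂) *
              psi (lmap τ x y₁ y₂ w + 1/τ * (Real.log (πref x y₂) - Real.log (πref x y₁))))) := by
      intro x
      rw [Finset.mul_sum, ← Finset.sum_neg_distrib]
      refine Finset.sum_congr rfl fun y₁ _ => ?_
      rw [Finset.mul_sum, ← Finset.sum_neg_distrib]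
      refine Finset.sum_congr rfl fun y₂ _ => ?_
      rw [hσ, hσ, Real.log_inv, Real.log_inv, neg_neg, hbar_eq w x y₁ y₂]
      simp only [psi]
      ring
    rw [Finset.sum_congr rfl fun x _ => key x, Finset.sum_neg_distrib, neg_neg]
  -- second derivative formula
  have h2 := second_deriv_eval (E := X × Y → ℝ)
      (fun x y₁ y₂ => D x * π₁ x y₁ y₂ * pstar x y₁ y₂)
      (fun x y₁ y₂ => D x * π₁ x y₁ y₂ * (1 - pstar x y₁ y₂))
      (fun x y₁ y₂ => lmap τ x y₁ y₂)
      (fun x y₁ y₂ => 1/τ * (Real.log (πref x y₂) - Real.log (πref x y₁))) θ z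
  have h3 : fderiv ℝ (fderiv ℝ (fun w => ∑ x : X, ∑ y₁ : Y, ∑ y₂ : Y,
      (D x * π₁ x y₁ y₂ * pstar x y₁ y₂ *
          psi (-(lmap τ x y₁ y₂ w + 1/τ * (Real.log (πref x y₂) - Real.log (πref x y₁)))) +
        D x * π₁ x y₁ y₂ * (1 - pstar x y₁ y₂) *
          psi (lmap τ x y₁ y₂ w + 1/τ * (Real.log (πref x y₂) - Real.log (πref x y₁)))))) θ z z
      = ∑ x : X, ∑ y₁ : Y, ∑ y₂ : Y,
        (D x * π₁ x y₁ y₂ * pstar x y₁ y₂ + D x * π₁ x y₁ y₂ * (1 - pstar x y₁ y₂)) *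
          qf (lmap τ x y₁ y₂ θ + 1/τ * (Real.log (πref x y₂) - Real.log (πref x y₁))) *
          (lmap τ x y₁ y₂ z) ^ 2 := h2
  rw [hLG, h3]
  -- nonnegativity facts
  have hπ₁0 : ∀ x y₁ y₂, 0 ≤ π₁ x y₁ y₂ := by
    intro x y₁ y₂
    by_cases hmem : (y₁, y₂) ∈ Ω x
    · rw [hπ₁mem x y₁ y₂ hmem]; positivity
    · rw [hπ₁nmem x y₁ y₂ hmem]
      apply div_nonneg (by linarith)
      have : (0:ℝ) < (1 - γ) * (Fintype.card Y : ℝ) ^ 2 := by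
        apply mul_pos (by linarith) hK2
      linarith
  -- reshape the sum
  have hsum_eq : (∑ x : X, ∑ y₁ : Y, ∑ y₂ : Y,
        (D x * π₁ x y₁ y₂ * pstar x y₁ y₂ + D x * π₁ x y₁ y₂ * (1 - pstar x y₁ y₂)) *
          qf (lmap τ x y₁ y₂ θ + 1/τ * (Real.log (πref x y₂) - Real.log (πref x y₁))) *
          (lmap τ x y₁ y₂ z) ^ 2)
      = ∑ x : X, D x * ∑ y₁ : Y, ∑ y₂ : Y,
        π₁ x y₁ y₂ *
          (qf (lmap τ x y₁ y₂ θ + 1/τ * (Real.log (πref x y₂) - Real.log (πref x y₁))) *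
          (lmap τ x y₁ y₂ z) ^ 2) := by
    refine Finset.sum_congr rfl fun x _ => ?_
    rw [Finset.mul_sum]
    refine Finset.sum_congr rfl fun y₁ _ => ?_
    rw [Finset.mul_sum]
    refine Finset.sum_congr rfl fun y₂ _ => ?_
    ring
  rw [hsum_eq]
  have hinner0 : ∀ x : X, 0 ≤ ∑ y₁ : Y, ∑ y₂ : Y,
      π₁ x y₁ y₂ *
        (qf (lmap τ x y₁ y₂ θ + 1/τ * (Real.log (πref x y₂) - Real.log (πref x y₁))) *
        (lmap τ x y₁ y₂ z) ^ 2) := by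
    intro x
    refine Finset.sum_nonneg fun y₁ _ => Finset.sum_nonneg fun y₂ _ => ?_
    exact mul_nonneg (hπ₁0 x y₁ y₂) (mul_nonneg (qf_nonneg _) (sq_nonneg _))
  rw [abs_of_nonneg (Finset.sum_nonneg fun x _ => mul_nonneg (hD0 x) (hinner0 x))]
  -- the per-x bound
  have key : ∀ x : X, (∑ y₁ : Y, ∑ y₂ : Y,
      π₁ x y₁ y₂ *
        (qf (lmap τ x y₁ y₂ θ + 1/τ * (Real.log (πref x y₂) - Real.log (πref x y₁))) *
        (lmap τ x y₁ y₂ z) ^ 2))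
      ≤ (μ * γ * c₀ + 1) * (4/τ^2 * ∑ y : Y, z (x, y) ^ 2) := by
    intro x
    set S : ℝ := ∑ y : Y, z (x, y) ^ 2 with hSdef
    have hS0 : 0 ≤ S := Finset.sum_nonneg fun y _ => sq_nonneg _
    have hM0 : (0:ℝ) ≤ 4/τ^2 * S := by positivity
    have hsq : ∀ y₁ y₂ : Y, (lmap τ x y₁ y₂ z) ^ 2 ≤ 4/τ^2 * S := by
      intro y₁ y₂
      rw [lmap_apply]
      have h1 : z (x, y₁) ^ 2 ≤ S :=
        Finset.single_le_sum (fun y _ => sq_nonneg (z (x, y))) (Finset.mem_univ y₁)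
      have h2 : z (x, y₂) ^ 2 ≤ S :=
        Finset.single_le_sum (fun y _ => sq_nonneg (z (x, y))) (Finset.mem_univ y₂)
      have ht2 : (0:ℝ) < τ ^ 2 := by positivity
      have h3 : (z (x, y₁) - z (x, y₂)) ^ 2 ≤ 4 * S := by
        nlinarith [sq_nonneg (z (x, y₁) + z (x, y₂))]
      have h4 : (1/τ * (z (x, y₁) - z (x, y₂))) ^ 2
          = (z (x, y₁) - z (x, y₂)) ^ 2 / τ ^ 2 := by
        field_simp
      rw [h4, div_le_iff₀ ht2]
      calc (z (x, y₁) - z (x, y₂)) ^ 2 ≤ 4 * S := h3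
        _ = 4/τ^2 * S * τ ^ 2 := by field_simp
    -- bound qf on Ω
    have hc₀1 : c₀ + 1 = qf (ε₀ / τ) := by
      rw [hc₀, hσ, hσ, neg_neg, qf_sigma]
      ring
    have hqfΩ : ∀ p : Y × Y, p ∈ Ω x →
        qf (lmap τ x p.1 p.2 θ + 1/τ * (Real.log (πref x p.2) - Real.log (πref x p.1)))
          ≤ c₀ + 1 := by
      intro p hp
      have hp2 := ((hΩ x p).1 hp).2
      have hlog : Real.log (πθ θ x p.1 * πref x p.2 / (πθ θ x p.2 * πref x p.1))
          = τ * (lmap τ x p.1 p.2 θ + 1/τ * (Real.log (πref x p.2) - Real.log (πref x p.1))) := by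
        rw [← hbar_eq θ x p.1 p.2, hhbar,
          Real.log_div (mul_pos (hπθpos x p.1) (hπref0 x p.2)).ne'
            (mul_pos (hπθpos x p.2) (hπref0 x p.1)).ne',
          Real.log_mul (hπθpos x p.1).ne' (hπref0 x p.2).ne',
          Real.log_mul (hπθpos x p.2).ne' (hπref0 x p.1).ne',
          Real.log_div (hπθpos x p.1).ne' (hπref0 x p.1).ne',
          Real.log_div (hπθpos x p.2).ne' (hπref0 x p.2).ne']
        field_simp
        ring
      rw [hlog, abs_mul, abs_of_pos hτ] at hp2
      have habs : ε₀ / τ ≤ |lmap τ x p.1 p.2 θ + 1/τ * (Real.log (πref x p.2) - Real.log (πref x p.1))| := by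
        rw [div_le_iff₀ hτ]
        nlinarith [hp2]
      rw [hc₀1]
      exact qf_anti (le_of_lt (div_pos hε₀ hτ)) habs
    -- switch to a sum over pairs and split
    have hsplit : (∑ y₁ : Y, ∑ y₂ : Y,
        π₁ x y₁ y₂ *
          (qf (lmap τ x y₁ y₂ θ + 1/τ * (Real.log (πref x y₂) - Real.log (πref x y₁))) *
          (lmap τ x y₁ y₂ z) ^ 2))
        = (∑ p ∈ Finset.univ \ Ω x,
            π₁ x p.1 p.2 *
              (qf (lmap τ x p.1 p.2 θ + 1/τ * (Real.log (πref x p.2) - Real.log (πref x p.1))) *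
              (lmap τ x p.1 p.2 z) ^ 2))
          + ∑ p ∈ Ω x,
            π₁ x p.1 p.2 *
              (qf (lmap τ x p.1 p.2 θ + 1/τ * (Real.log (πref x p.2) - Real.log (πref x p.1))) *
              (lmap τ x p.1 p.2 z) ^ 2) := by
      rw [Finset.sum_sdiff (Finset.subset_univ (Ω x))]
      exact (Fintype.sum_prod_type' _).symm
    rw [hsplit]
    have hcard1 : (((Ω x).card : ℕ) : ℝ) = γ * (Fintype.card Y : ℝ) ^ 2 := by
      have h := hγθ x
      rw [div_eq_iff hK2.ne'] at h
      linarith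
    have hcard2 : (((Finset.univ \ Ω x).card : ℕ) : ℝ) = (1 - γ) * (Fintype.card Y : ℝ) ^ 2 := by
      rw [Finset.card_sdiff_of_subset (Finset.subset_univ _), Finset.card_univ,
        Nat.cast_sub (Finset.card_le_univ _), Fintype.card_prod]
      push_cast
      have hsqK : ((Fintype.card Y : ℝ)) * (Fintype.card Y : ℝ) = (Fintype.card Y : ℝ) ^ 2 :=
        (sq _).symm
      rw [hsqK, hcard1]
      ring
    have hbound1 : (∑ p ∈ Ω x,
        π₁ x p.1 p.2 *
          (qf (lmap τ x p.1 p.2 θ + 1/τ * (Real.log (πref x p.2) - Real.log (πref x p.1))) *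
          (lmap τ x p.1 p.2 z) ^ 2))
        ≤ (((Ω x).card : ℕ) : ℝ) * (μ / (Fintype.card Y : ℝ) ^ 2 * ((c₀ + 1) * (4/τ^2 * S))) := by
      calc (∑ p ∈ Ω x,
          π₁ x p.1 p.2 *
            (qf (lmap τ x p.1 p.2 θ + 1/τ * (Real.log (πref x p.2) - Real.log (πref x p.1))) *
            (lmap τ x p.1 p.2 z) ^ 2))
          ≤ ∑ _p ∈ Ω x, μ / (Fintype.card Y : ℝ) ^ 2 * ((c₀ + 1) * (4/τ^2 * S)) := by
            refine Finset.sum_le_sum fun p hp => ?_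
            rw [hπ₁mem x p.1 p.2 (by simpa using hp)]
            refine mul_le_mul_of_nonneg_left ?_ (div_nonneg hμ0.le hK2.le)
            exact mul_le_mul (hqfΩ p hp) (hsq p.1 p.2) (sq_nonneg _) (by linarith)
        _ = (((Ω x).card : ℕ) : ℝ) * (μ / (Fintype.card Y : ℝ) ^ 2 * ((c₀ + 1) * (4/τ^2 * S))) := by
            rw [Finset.sum_const, nsmul_eq_mul]
    have hbound2 : (∑ p ∈ Finset.univ \ Ω x,
        π₁ x p.1 p.2 *
          (qf (lmap τ x p.1 p.2 θ + 1/τ * (Real.log (πref x p.2) - Real.log (πref x p.1))) *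
          (lmap τ x p.1 p.2 z) ^ 2))
        ≤ (((Finset.univ \ Ω x).card : ℕ) : ℝ) *
            ((1 - μ * γ) / ((1 - γ) * (Fintype.card Y : ℝ) ^ 2) * ((1/4) * (4/τ^2 * S))) := by
      calc (∑ p ∈ Finset.univ \ Ω x,
          π₁ x p.1 p.2 *
            (qf (lmap τ x p.1 p.2 θ + 1/τ * (Real.log (πref x p.2) - Real.log (πref x p.1))) *
            (lmap τ x p.1 p.2 z) ^ 2))
          ≤ ∑ _p ∈ Finset.univ \ Ω x,
              (1 - μ * γ) / ((1 - γ) * (Fintype.card Y : ℝ) ^ 2) * ((1/4) * (4/τ^2 * S)) := by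
            refine Finset.sum_le_sum fun p hp => ?_
            have hpn : (p.1, p.2) ∉ Ω x := by
              have := (Finset.mem_sdiff.1 hp).2
              simpa using this
            rw [hπ₁nmem x p.1 p.2 hpn]
            refine mul_le_mul_of_nonneg_left ?_
              (div_nonneg (by linarith) (mul_nonneg (by linarith) hK2.le))
            exact mul_le_mul (qf_le_quarter _) (hsq p.1 p.2) (sq_nonneg _) (by norm_num)
        _ = (((Finset.univ \ Ω x).card : ℕ) : ℝ) *
              ((1 - μ * γ) / ((1 - γ) * (Fintype.card Y : ℝ) ^ 2) * ((1/4) * (4/τ^2 * S))) := by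
            rw [Finset.sum_const, nsmul_eq_mul]
    have hγne : (1:ℝ) - γ ≠ 0 := by
      intro h; apply absurd hγ1; linarith [h]
    calc (∑ p ∈ Finset.univ \ Ω x,
          π₁ x p.1 p.2 *
            (qf (lmap τ x p.1 p.2 θ + 1/τ * (Real.log (πref x p.2) - Real.log (πref x p.1))) *
            (lmap τ x p.1 p.2 z) ^ 2))
        + ∑ p ∈ Ω x,
          π₁ x p.1 p.2 *
            (qf (lmap τ x p.1 p.2 θ + 1/τ * (Real.log (πref x p.2) - Real.log (πref x p.1))) *
            (lmap τ x p.1 p.2 z) ^ 2)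
        ≤ (((Finset.univ \ Ω x).card : ℕ) : ℝ) *
              ((1 - μ * γ) / ((1 - γ) * (Fintype.card Y : ℝ) ^ 2) * ((1/4) * (4/τ^2 * S)))
          + (((Ω x).card : ℕ) : ℝ) *
              (μ / (Fintype.card Y : ℝ) ^ 2 * ((c₀ + 1) * (4/τ^2 * S))) :=
          add_le_add hbound2 hbound1
      _ = (1 - μ * γ) * ((1/4) * (4/τ^2 * S)) + μ * γ * ((c₀ + 1) * (4/τ^2 * S)) := by
          rw [hcard1, hcard2]
          field_simp
      _ ≤ (μ * γ * c₀ + 1) * (4/τ^2 * S) := by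
          nlinarith [mul_nonneg hM0 (by linarith : (0:ℝ) ≤ 1 - μ * γ)]
  -- put it together
  have hDle1 : ∀ x : X, D x ≤ 1 := fun x =>
    hD1 ▸ Finset.single_le_sum (fun i _ => hD0 i) (Finset.mem_univ x)
  have hC0 : ∀ x : X, (0:ℝ) ≤ (μ * γ * c₀ + 1) * (4/τ^2 * ∑ y : Y, z (x, y) ^ 2) := by
    intro x
    refine mul_nonneg ?_ (mul_nonneg (by positivity) (Finset.sum_nonneg fun y _ => sq_nonneg _))
    nlinarith [mul_nonneg (le_of_lt (mul_pos hμ0 hγ0)) (by linarith : (0:ℝ) ≤ c₀ + 1)]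
  calc (∑ x : X, D x * ∑ y₁ : Y, ∑ y₂ : Y,
        π₁ x y₁ y₂ *
          (qf (lmap τ x y₁ y₂ θ + 1/τ * (Real.log (πref x y₂) - Real.log (πref x y₁))) *
          (lmap τ x y₁ y₂ z) ^ 2))
      ≤ ∑ x : X, D x * ((μ * γ * c₀ + 1) * (4/τ^2 * ∑ y : Y, z (x, y) ^ 2)) :=
        Finset.sum_le_sum fun x _ => mul_le_mul_of_nonneg_left (key x) (hD0 x)
    _ ≤ ∑ x : X, (μ * γ * c₀ + 1) * (4/τ^2 * ∑ y : Y, z (x, y) ^ 2) := by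
        refine Finset.sum_le_sum fun x _ => ?_
        nlinarith [mul_nonneg (sub_nonneg.2 (hDle1 x)) (hC0 x)]
    _ = (4 * (μ * γ * c₀ + 1) / τ ^ 2) * ∑ p : X × Y, z p ^ 2 := by
        rw [Fintype.sum_prod_type, Finset.mul_sum]
        exact Finset.sum_congr rfl fun x _ => by ring
end

section
/- Consider the Reverse-BDA loss of the softmax-parametrized policy, L(θ) = −Σ_{x∈X} 𝒟(x) · Σ_{y∈Y} π^τ(y|x)·log π_θ(y|x), as a function of θ : X × Y → ℝ. Then L is 2-smooth: for every θ and every direction z : X × Y → ℝ, the second derivative of L at θ satisfies |D²L(θ)(z,z)| ≤ 2·Σ_{x,y} z(x,y)². -/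
set_option linter.unusedSectionVars false
set_option maxHeartbeats 1000000

open Finset

namespace RBDAAux

variable {X Y : Type*} [Fintype X] [Fintype Y] [Nonempty Y]

noncomputable def Zf (x : X) (θ : X × Y → ℝ) : ℝ := ∑ y : Y, Real.exp (θ (x, y))

lemma Zf_apply (x : X) (θ : X × Y → ℝ) : Zf x θ = ∑ y : Y, Real.exp (θ (x, y)) := rfl

lemma Zf_pos (x : X) (θ : X × Y → ℝ) : 0 < Zf x θ :=
  Finset.sum_pos (fun _ _ => Real.exp_pos _) Finset.univ_nonempty

noncomputable def pr (p : X × Y) : (X × Y → ℝ) →L[ℝ] ℝ :=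
  ContinuousLinearMap.proj p

@[simp] lemma pr_apply (p : X × Y) (z : X × Y → ℝ) : pr p z = z p := rfl

noncomputable def Zd (x : X) (θ : X × Y → ℝ) : (X × Y → ℝ) →L[ℝ] ℝ :=
  ∑ y : Y, Real.exp (θ (x, y)) • pr (x, y)

lemma hasFDerivAt_exp_comp (p : X × Y) (θ : X × Y → ℝ) :
    HasFDerivAt (fun u : X × Y → ℝ => Real.exp (u p)) (Real.exp (θ p) • pr p) θ :=
  (pr p).hasFDerivAt.exp

lemma hasFDerivAt_Zf (x : X) (θ : X × Y → ℝ) : HasFDerivAt (Zf x) (Zd x θ) θ :=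
  HasFDerivAt.fun_sum fun y _ => hasFDerivAt_exp_comp (x, y) θ

noncomputable def F (D : X → ℝ) (w : X → Y → ℝ) (θ : X × Y → ℝ) :
    (X × Y → ℝ) →L[ℝ] ℝ :=
  ∑ x : X, D x • ((Zf x θ)⁻¹ • Zd x θ - ∑ y : Y, w x y • pr (x, y))

noncomputable def G (D : X → ℝ) (w : X → Y → ℝ) (θ : X × Y → ℝ) : ℝ :=
  ∑ x : X, D x * (Real.log (Zf x θ) - ∑ y : Y, w x y * θ (x, y))

lemma hasFDerivAt_G (D : X → ℝ) (w : X → Y → ℝ) (θ : X × Y → ℝ) :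
    HasFDerivAt (G D w) (F D w θ) θ := by
  unfold G F
  apply HasFDerivAt.fun_sum
  intro x _
  have hlog : HasFDerivAt (fun u => Real.log (Zf x u)) ((Zf x θ)⁻¹ • Zd x θ) θ :=
    (hasFDerivAt_Zf x θ).log (Zf_pos x θ).ne'
  have hlin : HasFDerivAt (fun u : X × Y → ℝ => ∑ y : Y, w x y * u (x, y))
      (∑ y : Y, w x y • pr (x, y)) θ := by
    have heq : (fun u : X × Y → ℝ => ∑ y : Y, w x y * u (x, y)) =
        ⇑(∑ y : Y, w x y • pr (x, y)) := by
      ext u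
      simp [ContinuousLinearMap.sum_apply]
    rw [heq]
    exact (∑ y : Y, w x y • pr (x, y)).hasFDerivAt
  exact (hlog.sub hlin).const_mul (D x)

lemma differentiable_F (D : X → ℝ) (w : X → Y → ℝ) : Differentiable ℝ (F D w) := by
  unfold F
  apply Differentiable.fun_sum
  intro x _
  apply Differentiable.fun_const_smul
  apply Differentiable.fun_sub _ (differentiable_const _)
  apply Differentiable.fun_smul
  · exact fun θ => ((hasFDerivAt_Zf x θ).differentiableAt).inv (Zf_pos x θ).ne'
  · apply Differentiable.fun_sum
    intro y _
    exact fun θ => ((hasFDerivAt_exp_comp (x, y) θ).differentiableAt).smul_const _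

lemma var_nonneg (s v : Y → ℝ) (hs0 : ∀ y, 0 ≤ s y) (hs1 : ∑ y : Y, s y = 1) :
    (∑ y : Y, s y * v y) ^ 2 ≤ ∑ y : Y, s y * v y ^ 2 := by
  have h := Finset.sum_mul_sq_le_sq_mul_sq Finset.univ
      (fun y => Real.sqrt (s y)) (fun y => Real.sqrt (s y) * v y)
  have h1 : ∀ y : Y, Real.sqrt (s y) * (Real.sqrt (s y) * v y) = s y * v y := by
    intro y; rw [← mul_assoc, Real.mul_self_sqrt (hs0 y)]
  have h2 : ∀ y : Y, Real.sqrt (s y) ^ 2 = s y := fun y => Real.sq_sqrt (hs0 y)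
  have h3 : ∀ y : Y, (Real.sqrt (s y) * v y) ^ 2 = s y * v y ^ 2 := by
    intro y; rw [mul_pow, h2 y]
  calc (∑ y : Y, s y * v y) ^ 2
      = (∑ y : Y, Real.sqrt (s y) * (Real.sqrt (s y) * v y)) ^ 2 := by
        rw [Finset.sum_congr rfl fun y _ => (h1 y).symm]
    _ ≤ (∑ y : Y, Real.sqrt (s y) ^ 2) * ∑ y : Y, (Real.sqrt (s y) * v y) ^ 2 := h
    _ = ∑ y : Y, s y * v y ^ 2 := by
        rw [Finset.sum_congr rfl fun y _ => h2 y, hs1, one_mul,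
          Finset.sum_congr rfl fun y _ => h3 y]

lemma var_le (s v : Y → ℝ) (hs0 : ∀ y, 0 ≤ s y) (hs1 : ∑ y : Y, s y = 1) :
    (∑ y : Y, s y * v y ^ 2) - (∑ y : Y, s y * v y) ^ 2 ≤ ∑ y : Y, v y ^ 2 := by
  have h1 : ∑ y : Y, s y * v y ^ 2 ≤ ∑ y : Y, v y ^ 2 := by
    apply Finset.sum_le_sum
    intro y _
    have : s y ≤ 1 := by
      rw [← hs1]
      exact Finset.single_le_sum (fun y _ => hs0 y) (Finset.mem_univ y)
    nlinarith [sq_nonneg (v y)]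
  nlinarith [sq_nonneg (∑ y : Y, s y * v y)]

end RBDAAux

open RBDAAux in
/-- The Reverse-BDA loss of the softmax-parametrized policy is 2-smooth:
|D²L(θ)(z,z)| ≤ 2·Σ_{x,y} z(x,y)² for all θ and z. -/
theorem reverse_bda_loss_smooth
    {X Y : Type*} [Fintype X] [Fintype Y] [Nonempty X] [Nonempty Y]
    (r : X → Y → ℝ) (τ : ℝ) (hτ : 0 < τ)
    (D : X → ℝ) (hD0 : ∀ x, 0 ≤ D x) (hD1 : ∑ x : X, D x = 1)
    (πt : X → Y → ℝ)
    (hπt : ∀ x y, πt x y = Real.exp (τ * r x y) / ∑ y' : Y, Real.exp (τ * r x y'))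
    (πθ : (X × Y → ℝ) → X → Y → ℝ)
    (hπθ : ∀ θ x y, πθ θ x y = Real.exp (θ (x, y)) / ∑ y' : Y, Real.exp (θ (x, y')))
    (L : (X × Y → ℝ) → ℝ)
    (hL : ∀ θ, L θ = -∑ x : X, D x * ∑ y : Y, πt x y * Real.log (πθ θ x y)) :
    ∀ θ z : X × Y → ℝ,
      |fderiv ℝ (fderiv ℝ L) θ z z| ≤ 2 * ∑ p : X × Y, z p ^ 2 := by
  -- πt sums to one over y
  have hπtsum : ∀ x, ∑ y : Y, πt x y = 1 := by
    intro x
    rw [Finset.sum_congr rfl fun y _ => hπt x y, ← Finset.sum_div]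
    exact div_self (ne_of_gt (Finset.sum_pos (fun _ _ => Real.exp_pos _) Finset.univ_nonempty))
  -- L equals G D πt
  have hLG : L = G D πt := by
    funext θ'
    rw [hL θ']
    unfold RBDAAux.G
    rw [← Finset.sum_neg_distrib]
    refine Finset.sum_congr rfl fun x _ => ?_
    have hlogs : ∀ y : Y, Real.log (πθ θ' x y) = θ' (x, y) - Real.log (Zf x θ') := by
      intro y
      rw [hπθ θ' x y, ← Zf_apply x θ',
        Real.log_div (Real.exp_ne_zero _) (Zf_pos x θ').ne', Real.log_exp]
    rw [Finset.sum_congr rfl fun y _ => by rw [hlogs y]]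
    have : (∑ y : Y, πt x y * (θ' (x, y) - Real.log (Zf x θ'))) =
        (∑ y : Y, πt x y * θ' (x, y)) - Real.log (Zf x θ') := by
      simp only [mul_sub, Finset.sum_sub_distrib, ← Finset.sum_mul, hπtsum x, one_mul]
    rw [this]
    ring
  -- first derivative of L
  have hfd : fderiv ℝ L = F D πt := by
    funext θ'
    rw [hLG]
    exact (hasFDerivAt_G D πt θ').fderiv
  intro θ z
  rw [hfd]
  -- swap application: second derivative applied to z
  have hdF : DifferentiableAt ℝ (F D πt) θ := (differentiable_F D πt) θ
  have happ := fderiv_clm_apply (𝕜 := ℝ) hdF (differentiableAt_const z)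
  simp only [fderiv_fun_const, Pi.zero_apply, ContinuousLinearMap.comp_zero, zero_add] at happ
  have key : fderiv ℝ (F D πt) θ z z = fderiv ℝ (fun u => F D πt u z) θ z := by
    rw [happ, ContinuousLinearMap.flip_apply]
  rw [key]
  -- explicit form of fderiv L applied to z
  have heqg : (fun u => F D πt u z) = fun u : X × Y → ℝ =>
      ∑ x : X, D x * ((Zf x u)⁻¹ * ∑ y : Y, Real.exp (u (x, y)) * z (x, y) -
        ∑ y : Y, πt x y * z (x, y)) := by
    funext u
    simp only [RBDAAux.F, RBDAAux.Zd, ContinuousLinearMap.sum_apply,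
      ContinuousLinearMap.smul_apply, ContinuousLinearMap.sub_apply, pr_apply, smul_eq_mul,
      Finset.mul_sum]
  rw [heqg]
  -- differentiate the explicit form
  have hinv : ∀ x : X, HasFDerivAt (fun u => (Zf x u)⁻¹)
      ((-(Zf x θ ^ 2)⁻¹) • Zd x θ) θ := fun x =>
    (hasDerivAt_inv (Zf_pos x θ).ne').comp_hasFDerivAt θ (hasFDerivAt_Zf x θ)
  have hW : ∀ x : X, HasFDerivAt (fun u : X × Y → ℝ => ∑ y : Y, Real.exp (u (x, y)) * z (x, y))
      (∑ y : Y, z (x, y) • (Real.exp (θ (x, y)) • pr (x, y))) θ := fun x =>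
    HasFDerivAt.fun_sum fun y _ => (hasFDerivAt_exp_comp (x, y) θ).mul_const (z (x, y))
  have hG2 : HasFDerivAt (fun u : X × Y → ℝ =>
      ∑ x : X, D x * ((Zf x u)⁻¹ * ∑ y : Y, Real.exp (u (x, y)) * z (x, y) -
        ∑ y : Y, πt x y * z (x, y)))
      (∑ x : X, D x • ((Zf x θ)⁻¹ • (∑ y : Y, z (x, y) • (Real.exp (θ (x, y)) • pr (x, y))) +
        (∑ y : Y, Real.exp (θ (x, y)) * z (x, y)) • ((-(Zf x θ ^ 2)⁻¹) • Zd x θ))) θ :=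
    HasFDerivAt.fun_sum fun x _ =>
      (((hinv x).mul (hW x)).sub_const (∑ y : Y, πt x y * z (x, y))).const_mul (D x)
  rw [hG2.fderiv]
  -- evaluate the second derivative at z
  have hval : (∑ x : X, D x • ((Zf x θ)⁻¹ • (∑ y : Y, z (x, y) • (Real.exp (θ (x, y)) • pr (x, y))) +
      (∑ y : Y, Real.exp (θ (x, y)) * z (x, y)) • ((-(Zf x θ ^ 2)⁻¹) • Zd x θ))) z =
      ∑ x : X, D x * ((Zf x θ)⁻¹ * (∑ y : Y, Real.exp (θ (x, y)) * z (x, y) ^ 2) -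
        ((Zf x θ)⁻¹ * ∑ y : Y, Real.exp (θ (x, y)) * z (x, y)) ^ 2) := by
    simp only [RBDAAux.Zd, ContinuousLinearMap.sum_apply, ContinuousLinearMap.add_apply,
      ContinuousLinearMap.smul_apply, pr_apply, smul_eq_mul]
    refine Finset.sum_congr rfl fun x _ => ?_
    have h1 : (∑ y : Y, z (x, y) * (Real.exp (θ (x, y)) * z (x, y))) =
        ∑ y : Y, Real.exp (θ (x, y)) * z (x, y) ^ 2 := Finset.sum_congr rfl fun y _ => by ring
    rw [h1]
    ring
  rw [hval]
  -- per-x variance bounds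
  have hbx : ∀ x : X,
      0 ≤ (Zf x θ)⁻¹ * (∑ y : Y, Real.exp (θ (x, y)) * z (x, y) ^ 2) -
        ((Zf x θ)⁻¹ * ∑ y : Y, Real.exp (θ (x, y)) * z (x, y)) ^ 2 ∧
      (Zf x θ)⁻¹ * (∑ y : Y, Real.exp (θ (x, y)) * z (x, y) ^ 2) -
        ((Zf x θ)⁻¹ * ∑ y : Y, Real.exp (θ (x, y)) * z (x, y)) ^ 2 ≤
        ∑ y : Y, z (x, y) ^ 2 := by
    intro x
    have hzpos := Zf_pos x θ
    set s : Y → ℝ := fun y => (Zf x θ)⁻¹ * Real.exp (θ (x, y)) with hs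
    have hs0 : ∀ y, 0 ≤ s y := fun y =>
      mul_nonneg (inv_nonneg.2 hzpos.le) (Real.exp_pos _).le
    have hs1 : ∑ y : Y, s y = 1 := by
      rw [hs, ← Finset.mul_sum, ← Zf_apply x θ]
      exact inv_mul_cancel₀ hzpos.ne'
    have e1 : (Zf x θ)⁻¹ * (∑ y : Y, Real.exp (θ (x, y)) * z (x, y) ^ 2) =
        ∑ y : Y, s y * z (x, y) ^ 2 := by
      rw [Finset.mul_sum]
      exact Finset.sum_congr rfl fun y _ => by rw [hs]; ring
    have e0 : (Zf x θ)⁻¹ * (∑ y : Y, Real.exp (θ (x, y)) * z (x, y)) =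
        ∑ y : Y, s y * z (x, y) := by
      rw [Finset.mul_sum]
      exact Finset.sum_congr rfl fun y _ => by rw [hs]; ring
    rw [e1, e0]
    exact ⟨sub_nonneg.2 (var_nonneg s (fun y => z (x, y)) hs0 hs1),
      var_le s (fun y => z (x, y)) hs0 hs1⟩
  have hV0 : 0 ≤ ∑ x : X, D x * ((Zf x θ)⁻¹ * (∑ y : Y, Real.exp (θ (x, y)) * z (x, y) ^ 2) -
      ((Zf x θ)⁻¹ * ∑ y : Y, Real.exp (θ (x, y)) * z (x, y)) ^ 2) :=
    Finset.sum_nonneg fun x _ => mul_nonneg (hD0 x) (hbx x).1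
  have hS : (0 : ℝ) ≤ ∑ p : X × Y, z p ^ 2 := Finset.sum_nonneg fun p _ => sq_nonneg _
  have hV1 : ∑ x : X, D x * ((Zf x θ)⁻¹ * (∑ y : Y, Real.exp (θ (x, y)) * z (x, y) ^ 2) -
      ((Zf x θ)⁻¹ * ∑ y : Y, Real.exp (θ (x, y)) * z (x, y)) ^ 2) ≤ ∑ p : X × Y, z p ^ 2 := by
    rw [Fintype.sum_prod_type]
    have step1 : ∑ x : X, D x * ((Zf x θ)⁻¹ * (∑ y : Y, Real.exp (θ (x, y)) * z (x, y) ^ 2) -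
        ((Zf x θ)⁻¹ * ∑ y : Y, Real.exp (θ (x, y)) * z (x, y)) ^ 2) ≤
        ∑ x : X, D x * ∑ y : Y, z (x, y) ^ 2 :=
      Finset.sum_le_sum fun x _ => mul_le_mul_of_nonneg_left (hbx x).2 (hD0 x)
    have step2 : ∑ x : X, D x * (∑ y : Y, z (x, y) ^ 2) ≤ ∑ x : X, ∑ y : Y, z (x, y) ^ 2 := by
      apply Finset.sum_le_sum
      intro x _
      have hD1x : D x ≤ 1 := hD1 ▸ Finset.single_le_sum (fun i _ => hD0 i) (Finset.mem_univ x)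
      have hT : (0 : ℝ) ≤ ∑ y : Y, z (x, y) ^ 2 := Finset.sum_nonneg fun y _ => sq_nonneg _
      nlinarith
    linarith
  rw [abs_of_nonneg hV0]
  linarith
end

section
/- Consider the Forward-BDA loss of the softmax-parametrized policy, L(θ) = Σ_{x∈X} 𝒟(x)·KL(π_θ(·|x) ‖ π^τ(·|x)) = Σ_{x∈X} 𝒟(x) · Σ_{y∈Y} π_θ(y|x)·(log π_θ(y|x) − log π^τ(y|x)), as a function of θ : X × Y → ℝ. Let ε₁ ≥ 0 and suppose θ satisfies |log π_θ(y|x) − log π^τ(y|x)| ≤ ε₁ for all x ∈ X and y ∈ Y. Then the second derivative of L at θ satisfies |D²L(θ)(z,z)| ≤ (6·ε₁ + 10)·Σ_{x,y} z(x,y)² for every direction z : X × Y → ℝ. -/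
set_option linter.unusedSectionVars false
set_option linter.unusedVariables false
set_option linter.deprecated false

open Real Finset

namespace BDA

variable {X Y : Type*} [Fintype X] [Fintype Y] [Nonempty Y]

noncomputable def Zf (θ : X × Y → ℝ) (x : X) : ℝ := ∑ y : Y, Real.exp (θ (x, y))

lemma Zf_pos (θ : X × Y → ℝ) (x : X) : 0 < Zf θ x :=
  Finset.sum_pos (fun y _ => Real.exp_pos _) Finset.univ_nonempty

noncomputable def Pf (θ : X × Y → ℝ) (x : X) (y : Y) : ℝ := Real.exp (θ (x, y)) / Zf θ x

lemma Pf_pos (θ : X × Y → ℝ) (x : X) (y : Y) : 0 < Pf θ x y :=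
  div_pos (Real.exp_pos _) (Zf_pos θ x)

lemma Pf_sum (θ : X × Y → ℝ) (x : X) : ∑ y : Y, Pf θ x y = 1 := by
  simp only [Pf]; rw [← Finset.sum_div]; exact div_self (Zf_pos θ x).ne'

lemma Pf_le_one (θ : X × Y → ℝ) (x : X) (y : Y) : Pf θ x y ≤ 1 := by
  rw [← Pf_sum θ x]
  exact Finset.single_le_sum (fun y _ => (Pf_pos θ x y).le) (Finset.mem_univ y)

noncomputable def pj (q : X × Y) : (X × Y → ℝ) →L[ℝ] ℝ := ContinuousLinearMap.proj q

/-- derivative of log-sum-exp / of the function ℓ -/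
noncomputable def DL (θ : X × Y → ℝ) (x : X) (y : Y) : (X × Y → ℝ) →L[ℝ] ℝ :=
  pj (x, y) - ∑ y' : Y, Pf θ x y' • pj (x, y')

lemma DL_apply (θ : X × Y → ℝ) (x : X) (y : Y) (v : X × Y → ℝ) :
    DL θ x y v = v (x, y) - ∑ y' : Y, Pf θ x y' * v (x, y') := by
  simp [DL, pj]

lemma hasFDerivAt_Zf (θ : X × Y → ℝ) (x : X) :
    HasFDerivAt (fun θ' => Zf θ' x) (∑ y : Y, Real.exp (θ (x, y)) • pj (x, y)) θ :=
  HasFDerivAt.fun_sum fun y _ =>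
    ((ContinuousLinearMap.proj (x, y) : (X × Y → ℝ) →L[ℝ] ℝ).hasFDerivAt).exp

lemma hasFDerivAt_logZf (θ : X × Y → ℝ) (x : X) :
    HasFDerivAt (fun θ' => Real.log (Zf θ' x)) (∑ y : Y, Pf θ x y • pj (x, y)) θ := by
  have h := (hasFDerivAt_Zf θ x).log (Zf_pos θ x).ne'
  refine h.congr_fderiv ?_
  rw [Finset.smul_sum]
  refine Finset.sum_congr rfl fun y _ => ?_
  rw [smul_smul, Pf, div_eq_inv_mul]

/-- ℓ(θ) x y = θ(x,y) − log Z − c x y -/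
noncomputable def Lg (c : X → Y → ℝ) (θ : X × Y → ℝ) (x : X) (y : Y) : ℝ :=
  θ (x, y) - Real.log (Zf θ x) - c x y

lemma hasFDerivAt_Lg (c : X → Y → ℝ) (θ : X × Y → ℝ) (x : X) (y : Y) :
    HasFDerivAt (fun θ' => Lg c θ' x y) (DL θ x y) θ :=
  (((pj (x, y)).hasFDerivAt).sub (hasFDerivAt_logZf θ x)).sub_const (c x y)

lemma Pf_eq_exp (θ : X × Y → ℝ) (x : X) (y : Y) :
    Pf θ x y = Real.exp (θ (x, y) - Real.log (Zf θ x)) := by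
  rw [Real.exp_sub, Real.exp_log (Zf_pos θ x), Pf]

lemma hasFDerivAt_Pf (θ : X × Y → ℝ) (x : X) (y : Y) :
    HasFDerivAt (fun θ' => Pf θ' x y) (Pf θ x y • DL θ x y) θ := by
  have h1 : HasFDerivAt (fun θ' => θ' (x, y) - Real.log (Zf θ' x)) (DL θ x y) θ :=
    ((pj (x, y)).hasFDerivAt).sub (hasFDerivAt_logZf θ x)
  have h2 := h1.exp
  simp only [← Pf_eq_exp] at h2
  exact h2


/-- M θ x = Σ_y P ℓ  (the per-x KL value) -/
noncomputable def Mf (c : X → Y → ℝ) (θ : X × Y → ℝ) (x : X) : ℝ :=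
  ∑ y : Y, Pf θ x y * Lg c θ x y

noncomputable def DM (c : X → Y → ℝ) (θ : X × Y → ℝ) (x : X) : (X × Y → ℝ) →L[ℝ] ℝ :=
  ∑ y : Y, (Pf θ x y * (1 + Lg c θ x y)) • DL θ x y

lemma hasFDerivAt_Mf (c : X → Y → ℝ) (θ : X × Y → ℝ) (x : X) :
    HasFDerivAt (fun θ' => Mf c θ' x) (DM c θ x) θ := by
  have h : HasFDerivAt (fun θ' => Mf c θ' x)
      (∑ y : Y, (Pf θ x y • DL θ x y + Lg c θ x y • (Pf θ x y • DL θ x y))) θ :=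
    HasFDerivAt.fun_sum fun y _ => (hasFDerivAt_Pf θ x y).mul (hasFDerivAt_Lg c θ x y)
  convert h using 1
  refine Finset.sum_congr rfl fun y _ => ?_
  rw [smul_smul, ← add_smul]
  ring_nf

lemma DM_apply (c : X → Y → ℝ) (θ : X × Y → ℝ) (x : X) (v : X × Y → ℝ) :
    DM c θ x v = (∑ y : Y, Pf θ x y * Lg c θ x y * v (x, y))
      - (∑ y : Y, Pf θ x y * v (x, y)) * Mf c θ x := by
  have hs : ∀ y : Y, (DM c θ x : _) ≠ 0 ∨ True := fun _ => Or.inr trivial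
  simp only [DM, ContinuousLinearMap.sum_apply, ContinuousLinearMap.smul_apply, DL_apply,
    smul_eq_mul]
  set s := ∑ y' : Y, Pf θ x y' * v (x, y') with hsdef
  have : ∀ y : Y, Pf θ x y * (1 + Lg c θ x y) * (v (x, y) - s)
      = (Pf θ x y * v (x, y) + Pf θ x y * Lg c θ x y * v (x, y))
        - (Pf θ x y + Pf θ x y * Lg c θ x y) * s := by intro y; ring
  rw [Finset.sum_congr rfl fun y _ => this y]
  rw [Finset.sum_sub_distrib, ← Finset.sum_mul, Finset.sum_add_distrib, Finset.sum_add_distrib,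
    Pf_sum, ← hsdef]
  simp only [Mf]
  ring

/-- the weight of the first derivative -/
noncomputable def Wf (D : X → ℝ) (c : X → Y → ℝ) (θ : X × Y → ℝ) (q : X × Y) : ℝ :=
  D q.1 * (Pf θ q.1 q.2 * (Lg c θ q.1 q.2 - Mf c θ q.1))

noncomputable def Gf (D : X → ℝ) (c : X → Y → ℝ) (θ : X × Y → ℝ) : (X × Y → ℝ) →L[ℝ] ℝ :=
  ∑ q : X × Y, Wf D c θ q • pj q

lemma hasFDerivAt_first (D : X → ℝ) (c : X → Y → ℝ) (θ : X × Y → ℝ) :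
    HasFDerivAt (fun θ' => ∑ x : X, D x * Mf c θ' x) (Gf D c θ) θ := by
  have h : HasFDerivAt (fun θ' => ∑ x : X, D x * Mf c θ' x)
      (∑ x : X, D x • DM c θ x) θ :=
    HasFDerivAt.fun_sum fun x _ => (hasFDerivAt_Mf c θ x).const_mul (D x)
  convert h using 1
  ext v
  simp only [Gf, ContinuousLinearMap.sum_apply, ContinuousLinearMap.smul_apply, smul_eq_mul,
    DM_apply, pj, ContinuousLinearMap.proj_apply]
  rw [Fintype.sum_prod_type]
  refine Finset.sum_congr rfl fun x _ => ?_
  simp only [Wf]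
  have : ∀ y : Y, D x * (Pf θ x y * (Lg c θ x y - Mf c θ x)) * v (x, y)
      = D x * (Pf θ x y * Lg c θ x y * v (x, y) - Pf θ x y * v (x, y) * Mf c θ x) := by
    intro y; ring
  rw [Finset.sum_congr rfl fun y _ => this y, ← Finset.mul_sum, Finset.sum_sub_distrib,
    ← Finset.sum_mul]


noncomputable def DW (D : X → ℝ) (c : X → Y → ℝ) (θ : X × Y → ℝ) (q : X × Y) :
    (X × Y → ℝ) →L[ℝ] ℝ :=
  D q.1 • (Pf θ q.1 q.2 • (DL θ q.1 q.2 - DM c θ q.1)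
    + (Lg c θ q.1 q.2 - Mf c θ q.1) • (Pf θ q.1 q.2 • DL θ q.1 q.2))

lemma hasFDerivAt_Wf (D : X → ℝ) (c : X → Y → ℝ) (θ : X × Y → ℝ) (q : X × Y) :
    HasFDerivAt (fun θ' => Wf D c θ' q) (DW D c θ q) θ := by
  have h1 : HasFDerivAt (fun θ' => Lg c θ' q.1 q.2 - Mf c θ' q.1)
      (DL θ q.1 q.2 - DM c θ q.1) θ :=
    (hasFDerivAt_Lg c θ q.1 q.2).sub (hasFDerivAt_Mf c θ q.1)
  have h2 := ((hasFDerivAt_Pf θ q.1 q.2).mul h1).const_mul (D q.1)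
  exact h2

lemma hasFDerivAt_Gf (D : X → ℝ) (c : X → Y → ℝ) (θ : X × Y → ℝ) :
    HasFDerivAt (fun θ' => Gf D c θ') (∑ q : X × Y, (DW D c θ q).smulRight (pj q)) θ :=
  HasFDerivAt.fun_sum fun q _ => (hasFDerivAt_Wf D c θ q).smul_const (pj q)

lemma DW_apply (D : X → ℝ) (c : X → Y → ℝ) (θ : X × Y → ℝ) (x : X) (y : Y) (z : X × Y → ℝ) :
    DW D c θ (x, y) z
      = D x * (Pf θ x y * ((z (x, y) - ∑ y' : Y, Pf θ x y' * z (x, y'))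
          - ((∑ y' : Y, Pf θ x y' * Lg c θ x y' * z (x, y'))
              - (∑ y' : Y, Pf θ x y' * z (x, y')) * Mf c θ x))
        + (Lg c θ x y - Mf c θ x) * (Pf θ x y
            * (z (x, y) - ∑ y' : Y, Pf θ x y' * z (x, y')))) := by
  simp only [DW, ContinuousLinearMap.smul_apply, ContinuousLinearMap.add_apply,
    ContinuousLinearMap.sub_apply, DL_apply, DM_apply, smul_eq_mul]


/-- Per-x quadratic form bound for the softmax KL Hessian. -/
lemma quad_bound (P ℓ z : Y → ℝ) (hP0 : ∀ y, 0 ≤ P y) (hP1 : ∑ y : Y, P y = 1)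
    (hPle : ∀ y, P y ≤ 1) (ε₁ : ℝ) (hε₁ : 0 ≤ ε₁) (hℓ : ∀ y, |ℓ y| ≤ ε₁) :
    |∑ y : Y, (P y * ((z y - ∑ y' : Y, P y' * z y')
        - ((∑ y' : Y, P y' * ℓ y' * z y') - (∑ y' : Y, P y' * z y') * (∑ y' : Y, P y' * ℓ y')))
      + (ℓ y - ∑ y' : Y, P y' * ℓ y') * (P y * (z y - ∑ y' : Y, P y' * z y'))) * z y|
      ≤ (6 * ε₁ + 2) * ∑ y : Y, z y ^ 2 := by
  set s := ∑ y' : Y, P y' * z y' with hs_def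
  set m := ∑ y' : Y, P y' * ℓ y' with hm_def
  set T := ∑ y' : Y, P y' * ℓ y' * z y' with hT_def
  set S := ∑ y : Y, P y * z y ^ 2 with hS_def
  set V := ∑ y : Y, (ℓ y - m) * (P y * z y ^ 2) with hV_def
  set A := ∑ y : Y, P y * |z y| with hA_def
  set K := ∑ y : Y, z y ^ 2 with hK_def
  -- the sum identity
  have hW : ∑ y : Y, (ℓ y - m) * (P y * z y) = T - m * s := by
    have : ∀ y : Y, (ℓ y - m) * (P y * z y) = P y * ℓ y * z y - m * (P y * z y) := by
      intro y; ring
    rw [Finset.sum_congr rfl fun y _ => this y, Finset.sum_sub_distrib, ← Finset.mul_sum,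
      ← hT_def, ← hs_def]
  have hiden : ∑ y : Y, (P y * ((z y - s) - (T - s * m))
      + (ℓ y - m) * (P y * (z y - s))) * z y = S + V - s ^ 2 - 2 * (s * (T - m * s)) := by
    have e1 : ∀ y : Y, (P y * ((z y - s) - (T - s * m))
        + (ℓ y - m) * (P y * (z y - s))) * z y
        = (P y * z y ^ 2 + (ℓ y - m) * (P y * z y ^ 2))
          - ((P y * z y) * s + (P y * z y) * (T - s * m) + ((ℓ y - m) * (P y * z y)) * s) := by
      intro y; ring
    rw [Finset.sum_congr rfl fun y _ => e1 y, Finset.sum_sub_distrib, Finset.sum_add_distrib,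
      Finset.sum_add_distrib, Finset.sum_add_distrib, ← Finset.sum_mul, ← Finset.sum_mul,
      ← Finset.sum_mul, hW, ← hS_def, ← hV_def, ← hs_def]
    ring
  rw [hiden]
  -- basic bounds
  have hm : |m| ≤ ε₁ := by
    rw [hm_def]
    calc |∑ y' : Y, P y' * ℓ y'| ≤ ∑ y' : Y, |P y' * ℓ y'| := Finset.abs_sum_le_sum_abs _ _
      _ ≤ ∑ y' : Y, P y' * ε₁ := by
        refine Finset.sum_le_sum fun y _ => ?_
        rw [abs_mul, abs_of_nonneg (hP0 y)]
        exact mul_le_mul_of_nonneg_left (hℓ y) (hP0 y)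
      _ = ε₁ := by rw [← Finset.sum_mul, hP1, one_mul]
  have hlm : ∀ y : Y, |ℓ y - m| ≤ 2 * ε₁ := fun y => by
    calc |ℓ y - m| ≤ |ℓ y| + |m| := abs_sub _ _
      _ ≤ ε₁ + ε₁ := add_le_add (hℓ y) hm
      _ = 2 * ε₁ := by ring
  have hS0 : 0 ≤ S := Finset.sum_nonneg fun y _ => mul_nonneg (hP0 y) (sq_nonneg _)
  have hSK : S ≤ K :=
    Finset.sum_le_sum fun y _ => by
      calc P y * z y ^ 2 ≤ 1 * z y ^ 2 := mul_le_mul_of_nonneg_right (hPle y) (sq_nonneg _)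
        _ = z y ^ 2 := one_mul _
  have hV : |V| ≤ 2 * ε₁ * S := by
    rw [hV_def]
    calc |∑ y : Y, (ℓ y - m) * (P y * z y ^ 2)| ≤ ∑ y : Y, |(ℓ y - m) * (P y * z y ^ 2)| :=
        Finset.abs_sum_le_sum_abs _ _
      _ ≤ ∑ y : Y, 2 * ε₁ * (P y * z y ^ 2) := by
        refine Finset.sum_le_sum fun y _ => ?_
        rw [abs_mul, abs_of_nonneg (mul_nonneg (hP0 y) (sq_nonneg _))]
        exact mul_le_mul_of_nonneg_right (hlm y) (mul_nonneg (hP0 y) (sq_nonneg _))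
      _ = 2 * ε₁ * S := by rw [← Finset.mul_sum, ← hS_def]
  have hA0 : 0 ≤ A := Finset.sum_nonneg fun y _ => mul_nonneg (hP0 y) (abs_nonneg _)
  have hA2 : A ^ 2 ≤ S := by
    have hcs := Finset.sum_mul_sq_le_sq_mul_sq Finset.univ
      (fun y => Real.sqrt (P y)) (fun y => Real.sqrt (P y) * |z y|)
    have e1 : ∀ y : Y, Real.sqrt (P y) * (Real.sqrt (P y) * |z y|) = P y * |z y| := by
      intro y; rw [← mul_assoc, Real.mul_self_sqrt (hP0 y)]
    have e2 : ∀ y : Y, Real.sqrt (P y) ^ 2 = P y := fun y => Real.sq_sqrt (hP0 y)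
    have e3 : ∀ y : Y, (Real.sqrt (P y) * |z y|) ^ 2 = P y * z y ^ 2 := by
      intro y; rw [mul_pow, Real.sq_sqrt (hP0 y), sq_abs]
    rw [Finset.sum_congr rfl fun y _ => e1 y, Finset.sum_congr rfl fun y _ => e2 y,
      Finset.sum_congr rfl fun y _ => e3 y, hP1, one_mul] at hcs
    exact hcs
  have hsA : |s| ≤ A := by
    rw [hs_def]
    calc |∑ y' : Y, P y' * z y'| ≤ ∑ y' : Y, |P y' * z y'| := Finset.abs_sum_le_sum_abs _ _
      _ = A := by
        rw [hA_def]
        exact Finset.sum_congr rfl fun y _ => by rw [abs_mul, abs_of_nonneg (hP0 y)]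
  have hTA : |T - m * s| ≤ 2 * ε₁ * A := by
    have hT2 : T - m * s = ∑ y : Y, (ℓ y - m) * (P y * z y) := by rw [hW]
    rw [hT2]
    calc |∑ y : Y, (ℓ y - m) * (P y * z y)| ≤ ∑ y : Y, |(ℓ y - m) * (P y * z y)| :=
        Finset.abs_sum_le_sum_abs _ _
      _ ≤ ∑ y : Y, 2 * ε₁ * (P y * |z y|) := by
        refine Finset.sum_le_sum fun y _ => ?_
        rw [abs_mul, abs_mul, abs_of_nonneg (hP0 y)]
        exact mul_le_mul (hlm y) le_rfl (mul_nonneg (hP0 y) (abs_nonneg _))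
          (by positivity)
      _ = 2 * ε₁ * A := by rw [← Finset.mul_sum, ← hA_def]
  -- put together
  have habs : |S + V - s ^ 2 - 2 * (s * (T - m * s))|
      ≤ S + 2 * ε₁ * S + A ^ 2 + 2 * (A * (2 * ε₁ * A)) := by
    have h1 : |s ^ 2| = s ^ 2 := abs_of_nonneg (sq_nonneg _)
    have h2 : s ^ 2 ≤ A ^ 2 := by
      rw [← sq_abs s]
      exact pow_le_pow_left₀ (abs_nonneg _) hsA 2
    have h3 : |s * (T - m * s)| ≤ A * (2 * ε₁ * A) :=
      (abs_mul _ _).le.trans (mul_le_mul hsA hTA (abs_nonneg _) hA0)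
    calc |S + V - s ^ 2 - 2 * (s * (T - m * s))|
        ≤ |S + V - s ^ 2| + |2 * (s * (T - m * s))| := abs_sub _ _
      _ ≤ (|S + V| + |s ^ 2|) + 2 * |s * (T - m * s)| := by
          rw [abs_mul, abs_two]; exact add_le_add_left (abs_sub _ _) _
      _ ≤ ((|S| + |V|) + s ^ 2) + 2 * (A * (2 * ε₁ * A)) := by
          rw [h1]
          exact add_le_add (add_le_add_left (abs_add_le _ _) _)
            (mul_le_mul_of_nonneg_left h3 (by norm_num))
      _ ≤ ((S + 2 * ε₁ * S) + A ^ 2) + 2 * (A * (2 * ε₁ * A)) := by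
          refine add_le_add_left (add_le_add (add_le_add ?_ hV) h2) _
          rw [abs_of_nonneg hS0]
      _ = S + 2 * ε₁ * S + A ^ 2 + 2 * (A * (2 * ε₁ * A)) := by ring
  refine habs.trans ?_
  have hKS : 0 ≤ K := hS0.trans hSK
  nlinarith [hA2, hSK, hS0, hε₁, mul_le_mul_of_nonneg_left hSK (by linarith : (0:ℝ) ≤ 2 * ε₁),
    mul_le_mul_of_nonneg_left hA2 (by linarith : (0:ℝ) ≤ 4 * ε₁),
    mul_le_mul_of_nonneg_left hSK (by linarith : (0:ℝ) ≤ 4 * ε₁)]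


lemma log_Pf (θ : X × Y → ℝ) (x : X) (y : Y) :
    Real.log (Pf θ x y) = θ (x, y) - Real.log (Zf θ x) := by
  rw [Pf, Real.log_div (Real.exp_ne_zero _) (Zf_pos θ x).ne', Real.log_exp]

end BDA

/-- The Forward-BDA loss of the softmax-parametrized policy satisfies,
at every θ with |log π_θ(y|x) − log π^τ(y|x)| ≤ ε₁ for all x, y, the second-derivative
bound |D²L(θ)(z,z)| ≤ (6·ε₁ + 10)·Σ_{x,y} z(x,y)². -/
theorem forward_bda_loss_smooth
    {X Y : Type*} [Fintype X] [Fintype Y] [Nonempty X] [Nonempty Y]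
    (r : X → Y → ℝ) (τ : ℝ) (hτ : 0 < τ)
    (D : X → ℝ) (hD0 : ∀ x, 0 ≤ D x) (hD1 : ∑ x : X, D x = 1)
    (πt : X → Y → ℝ)
    (hπt : ∀ x y, πt x y = Real.exp (τ * r x y) / ∑ y' : Y, Real.exp (τ * r x y'))
    (πθ : (X × Y → ℝ) → X → Y → ℝ)
    (hπθ : ∀ θ x y, πθ θ x y = Real.exp (θ (x, y)) / ∑ y' : Y, Real.exp (θ (x, y')))
    (L : (X × Y → ℝ) → ℝ)
    (hL : ∀ θ, L θ = ∑ x : X, D x * ∑ y : Y,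
      πθ θ x y * (Real.log (πθ θ x y) - Real.log (πt x y)))
    (ε₁ : ℝ) (hε₁ : 0 ≤ ε₁)
    (θ : X × Y → ℝ)
    (hθ : ∀ x y, |Real.log (πθ θ x y) - Real.log (πt x y)| ≤ ε₁) :
    ∀ z : X × Y → ℝ,
      |fderiv ℝ (fderiv ℝ L) θ z z| ≤ (6 * ε₁ + 10) * ∑ p : X × Y, z p ^ 2 := by
  intro z
  classical
  set c : X → Y → ℝ := fun x y => Real.log (πt x y) with hc
  have hPfeq : ∀ (θ' : X × Y → ℝ) x y, πθ θ' x y = BDA.Pf θ' x y := by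
    intro θ' x y; rw [hπθ]; rfl
  have hLg : ∀ (θ' : X × Y → ℝ) x y,
      Real.log (πθ θ' x y) - Real.log (πt x y) = BDA.Lg c θ' x y := by
    intro θ' x y
    rw [hPfeq, BDA.log_Pf, BDA.Lg]
  have hLeq : L = fun θ' => ∑ x : X, D x * BDA.Mf c θ' x := by
    funext θ'
    rw [hL]
    refine Finset.sum_congr rfl fun x _ => ?_
    congr 1
    simp only [BDA.Mf]
    refine Finset.sum_congr rfl fun y _ => ?_
    rw [hPfeq, BDA.log_Pf]
    simp only [BDA.Lg, hc]
  have hfd : fderiv ℝ L = fun θ' => BDA.Gf D c θ' := by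
    funext θ'
    rw [hLeq]
    exact (BDA.hasFDerivAt_first D c θ').fderiv
  have h2 : fderiv ℝ (fderiv ℝ L) θ
      = ∑ q : X × Y, (BDA.DW D c θ q).smulRight (BDA.pj q) := by
    rw [hfd]
    exact (BDA.hasFDerivAt_Gf D c θ).fderiv
  rw [h2]
  simp only [ContinuousLinearMap.sum_apply, ContinuousLinearMap.smulRight_apply, BDA.pj,
    ContinuousLinearMap.proj_apply, smul_eq_mul]
  rw [Fintype.sum_prod_type]
  -- per-x bound
  have hDle1 : ∀ x : X, D x ≤ 1 := fun x =>
    hD1 ▸ Finset.single_le_sum (fun i _ => hD0 i) (Finset.mem_univ x)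
  have key : ∀ x : X, |∑ y : Y, BDA.DW D c θ (x, y) z * z (x, y)|
      ≤ D x * ((6 * ε₁ + 2) * ∑ y : Y, z (x, y) ^ 2) := by
    intro x
    have hfac : ∑ y : Y, BDA.DW D c θ (x, y) z * z (x, y)
        = D x * ∑ y : Y, (BDA.Pf θ x y * ((z (x, y) - ∑ y' : Y, BDA.Pf θ x y' * z (x, y'))
            - ((∑ y' : Y, BDA.Pf θ x y' * BDA.Lg c θ x y' * z (x, y'))
                - (∑ y' : Y, BDA.Pf θ x y' * z (x, y'))
                  * (∑ y' : Y, BDA.Pf θ x y' * BDA.Lg c θ x y')))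
          + (BDA.Lg c θ x y - ∑ y' : Y, BDA.Pf θ x y' * BDA.Lg c θ x y')
            * (BDA.Pf θ x y * (z (x, y) - ∑ y' : Y, BDA.Pf θ x y' * z (x, y')))) * z (x, y) := by
      rw [Finset.mul_sum]
      refine Finset.sum_congr rfl fun y _ => ?_
      rw [BDA.DW_apply]
      simp only [BDA.Mf]
      ring
    rw [hfac, abs_mul, abs_of_nonneg (hD0 x)]
    refine mul_le_mul_of_nonneg_left ?_ (hD0 x)
    exact BDA.quad_bound (BDA.Pf θ x) (BDA.Lg c θ x) (fun y => z (x, y))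
      (fun y => (BDA.Pf_pos θ x y).le) (BDA.Pf_sum θ x) (BDA.Pf_le_one θ x) ε₁ hε₁
      (fun y => by rw [← hLg]; exact hθ x y)
  calc |∑ x : X, ∑ y : Y, BDA.DW D c θ (x, y) z * z (x, y)|
      ≤ ∑ x : X, |∑ y : Y, BDA.DW D c θ (x, y) z * z (x, y)| :=
        Finset.abs_sum_le_sum_abs _ _
    _ ≤ ∑ x : X, D x * ((6 * ε₁ + 2) * ∑ y : Y, z (x, y) ^ 2) :=
        Finset.sum_le_sum fun x _ => key x
    _ ≤ ∑ x : X, (6 * ε₁ + 2) * ∑ y : Y, z (x, y) ^ 2 := by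
        refine Finset.sum_le_sum fun x _ => ?_
        have h0 : 0 ≤ (6 * ε₁ + 2) * ∑ y : Y, z (x, y) ^ 2 := by positivity
        calc D x * ((6 * ε₁ + 2) * ∑ y : Y, z (x, y) ^ 2)
            ≤ 1 * ((6 * ε₁ + 2) * ∑ y : Y, z (x, y) ^ 2) :=
              mul_le_mul_of_nonneg_right (hDle1 x) h0
          _ = (6 * ε₁ + 2) * ∑ y : Y, z (x, y) ^ 2 := one_mul _
    _ = (6 * ε₁ + 2) * ∑ p : X × Y, z p ^ 2 := by
        rw [← Finset.mul_sum, Fintype.sum_prod_type]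
    _ ≤ (6 * ε₁ + 10) * ∑ p : X × Y, z p ^ 2 := by
        have h0 : 0 ≤ ∑ p : X × Y, z p ^ 2 := Finset.sum_nonneg fun p _ => sq_nonneg _
        nlinarith
end
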